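/- arXiv:2108.11058 — 7 statements merged into one kernel-verified Lean document; each statement's English description precedes it below -/
import Mathlib

section
/- Let f : ℝ → ℝ be a C¹ map and n a positive integer. Define F_{2n} : ℝ → ℝ by F_{2n}(x) = (f^{2n}(x) − x)/(f^n(x) − x) at points where f^n(x) ≠ x, and F_{2n}(x) = (f^n)′(x) + 1 at points where f^n(x) = x. Then F_{2n} is continuous on ℝ. -/
/-- Let `f : ℝ → ℝ` be a `C¹` map and `n` a positive integer.
Define `F : ℝ → ℝ` by `F x = (f^[2n] x - x) / (f^[n] x - x)` where `f^[n] x ≠ x`,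
and `F x = deriv (f^[n]) x + 1` where `f^[n] x = x`.  Then `F` is continuous on `ℝ`. -/
theorem stmt0 (f : ℝ → ℝ) (hf : ContDiff ℝ 1 f) (n : ℕ) (hn : 0 < n)
    (F : ℝ → ℝ)
    (hF₁ : ∀ x : ℝ, f^[n] x ≠ x → F x = (f^[2 * n] x - x) / (f^[n] x - x))
    (hF₂ : ∀ x : ℝ, f^[n] x = x → F x = deriv (f^[n]) x + 1) :
    Continuous F := by
  set g : ℝ → ℝ := f^[n] with hg_def
  have hg : ContDiff ℝ 1 g := by
    have : ∀ m : ℕ, ContDiff ℝ 1 f^[m] := by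
      intro m
      induction m with
      | zero => simpa using contDiff_id
      | succ k ih =>
        rw [Function.iterate_succ']
        exact hf.comp ih
    exact this n
  have hgd : Differentiable ℝ g := hg.differentiable one_ne_zero
  have hgc : Continuous g := hgd.continuous
  have hg' : Continuous (deriv g) := hg.continuous_deriv le_rfl
  have h2n : ∀ x, f^[2 * n] x = g (g x) := by
    intro x
    rw [two_mul, Function.iterate_add_apply]
  -- Mean value theorem helper
  have mvt : ∀ x y : ℝ, x < y → ∃ ξ ∈ Set.Ioo x y,
      deriv g ξ = (g y - g x) / (y - x) := fun x y hxy =>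
    exists_hasDerivAt_eq_slope g (deriv g) hxy hgc.continuousOn
      (fun z _ => (hgd z).hasDerivAt)
  rw [continuous_iff_continuousAt]
  intro a
  by_cases ha : g a = a
  · -- fixed point of g
    rw [Metric.continuousAt_iff]
    intro ε hε
    obtain ⟨δ₁, hδ₁pos, hδ₁⟩ := Metric.continuousAt_iff.mp (hg'.continuousAt (x := a)) ε hε
    obtain ⟨δ₂, hδ₂pos, hδ₂⟩ := Metric.continuousAt_iff.mp (hgc.continuousAt (x := a)) δ₁ hδ₁pos
    refine ⟨min δ₁ δ₂, lt_min hδ₁pos hδ₂pos, ?_⟩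
    intro x hx
    have hx₁ : dist x a < δ₁ := lt_of_lt_of_le hx (min_le_left _ _)
    have hx₂ : dist x a < δ₂ := lt_of_lt_of_le hx (min_le_right _ _)
    have hgx : dist (g x) a < δ₁ := by
      have := hδ₂ hx₂
      rwa [ha] at this
    rw [hF₂ a ha]
    by_cases hfx : g x = x
    · rw [hF₂ x hfx]
      have h := hδ₁ hx₁
      rw [Real.dist_eq] at h ⊢
      convert h using 2
      ring
    · rw [hF₁ x hfx]
      have hne : g x - x ≠ 0 := sub_ne_zero.mpr hfx
      have key : (f^[2 * n] x - x) / (g x - x) = (g (g x) - g x) / (g x - x) + 1 := by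
        rw [h2n]
        field_simp
        ring
      obtain ⟨ξ, hξd, hξ⟩ : ∃ ξ, dist ξ a < δ₁ ∧
          deriv g ξ = (g (g x) - g x) / (g x - x) := by
        rcases lt_or_gt_of_ne (Ne.symm hfx) with h | h
        · obtain ⟨ξ, hmem, heq⟩ := mvt x (g x) h
          refine ⟨ξ, ?_, heq⟩
          rw [Real.dist_eq, abs_lt]
          rw [Real.dist_eq, abs_lt] at hx₁ hgx
          constructor <;> [nlinarith [hmem.1]; nlinarith [hmem.2]]
        · obtain ⟨ξ, hmem, heq⟩ := mvt (g x) x h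
          refine ⟨ξ, ?_, ?_⟩
          · rw [Real.dist_eq, abs_lt]
            rw [Real.dist_eq, abs_lt] at hx₁ hgx
            constructor <;> [nlinarith [hmem.1]; nlinarith [hmem.2]]
          · rw [heq]
            rw [div_eq_div_iff (by linarith) (by intro h0; apply hne; linarith)]
            ring
      have h := hδ₁ hξd
      rw [Real.dist_eq] at h ⊢
      rw [key, ← hξ]
      convert h using 2
      ring
  · -- not a fixed point
    have hopen : IsOpen {x : ℝ | g x ≠ x} := by
      have : {x : ℝ | g x ≠ x} = (fun x => g x - x) ⁻¹' {0}ᶜ := by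
        ext x
        simp [sub_ne_zero]
      rw [this]
      exact (hgc.sub continuous_id).isOpen_preimage _ isOpen_compl_singleton
    have hmem : {x : ℝ | g x ≠ x} ∈ nhds a := hopen.mem_nhds ha
    have heq : F =ᶠ[nhds a] fun x => (f^[2 * n] x - x) / (g x - x) :=
      Filter.eventually_of_mem hmem fun x hx => hF₁ x hx
    have hcont : ContinuousAt (fun x => (f^[2 * n] x - x) / (g x - x)) a := by
      apply ContinuousAt.div
      · exact (((hgc.comp hgc).continuousAt).congr
          (Filter.Eventually.of_forall fun x => (h2n x).symm)).sub continuousAt_id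
      · exact (hgc.continuousAt).sub continuousAt_id
      · exact sub_ne_zero.mpr ha
    exact hcont.congr heq.symm
end

section
/- Let {f_t}_{t∈[0,1]} be a continuous full family of C¹ unimodal maps. Then for every positive integer m, the quotient map G_m : [0,1] × ℝ → ℝ is continuous. -/
/-- A `C¹` unimodal map: `f' > 0` on `(-∞,0)`, `f' < 0` on `(0,∞)`, `f' 0 = 0`. -/
def Unimodal (f : ℝ → ℝ) : Prop :=
  ContDiff ℝ 1 f ∧ (∀ x < (0 : ℝ), 0 < deriv f x) ∧
    (∀ x > (0 : ℝ), deriv f x < 0) ∧ deriv f 0 = 0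

/-- A `C¹` unimodal map is a horseshoe: it has exactly two fixed points, the left
one being `a`, and there are `a < a₁ < b₁ < b` with `f b = a`, `f a₁ = f b₁ = b`
and `|f'| > 1` on `[a,a₁] ∪ [b₁,b]`. -/
def Horseshoe (f : ℝ → ℝ) : Prop :=
  Unimodal f ∧ ∃ a c : ℝ, a < c ∧ {x : ℝ | f x = x} = {a, c} ∧
    ∃ a₁ b₁ b : ℝ, a < a₁ ∧ a₁ < b₁ ∧ b₁ < b ∧ f b = a ∧ f a₁ = b ∧ f b₁ = b ∧
      ∀ x ∈ Set.Icc a a₁ ∪ Set.Icc b₁ b, 1 < |deriv f x|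

/-- A continuous full family of `C¹` unimodal maps `f t`, `t ∈ [0,1]`:
`(t,x) ↦ f t x` and `(t,x) ↦ (f t)' x` are continuous on `[0,1] × ℝ`, each `f t`
is unimodal, `f 0` has no fixed point, `f 1` is a horseshoe, and there is `M > 0`
such that all fixed points of every `f t` lie in `[-M, M]`. -/
def ContFullFamily (f : ℝ → ℝ → ℝ) : Prop :=
  (∀ t ∈ Set.Icc (0 : ℝ) 1, Unimodal (f t)) ∧
  ContinuousOn (fun p : ℝ × ℝ => f p.1 p.2) (Set.Icc (0 : ℝ) 1 ×ˢ Set.univ) ∧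
  ContinuousOn (fun p : ℝ × ℝ => deriv (f p.1) p.2) (Set.Icc (0 : ℝ) 1 ×ˢ Set.univ) ∧
  (∀ x : ℝ, f 0 x ≠ x) ∧
  Horseshoe (f 1) ∧
  (∃ M > (0 : ℝ), ∀ t ∈ Set.Icc (0 : ℝ) 1, ∀ x : ℝ, f t x = x → x ∈ Set.Icc (-M) M)

open scoped Classical in
/-- The quotient map `G_m` of the family: for odd `m`, `G_m (t,x) = f_t^m x - x`;
for even `m = 2n`, it is `(f_t^{2n} x - x)/(f_t^n x - x)` off the fixed-point set
of `f_t^n`, and `(f_t^n)' x + 1` on it. -/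
noncomputable def Gmap (f : ℝ → ℝ → ℝ) (m : ℕ) (t x : ℝ) : ℝ :=
  if Odd m then (f t)^[m] x - x
  else if (f t)^[m / 2] x = x then deriv ((f t)^[m / 2]) x + 1
  else ((f t)^[m] x - x) / ((f t)^[m / 2] x - x)

/-- The zero set `G_m⁻¹(0) ⊆ [0,1] × ℝ`. -/
def Zset (f : ℝ → ℝ → ℝ) (m : ℕ) : Set (ℝ × ℝ) :=
  {p : ℝ × ℝ | p.1 ∈ Set.Icc (0 : ℝ) 1 ∧ Gmap f m p.1 p.2 = 0}

/-- `V` is a periodic point component of period-`m` data: a connected component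
of `G_m⁻¹(0)`. -/
def IsPPComponent (f : ℝ → ℝ → ℝ) (m : ℕ) (V : Set (ℝ × ℝ)) : Prop :=
  ∃ p ∈ Zset f m, V = connectedComponentIn (Zset f m) p

/-- The period of a periodic point component `V` is `n`: the maximum of the
minimal periods of its points is `n`. -/
def CompPeriod (f : ℝ → ℝ → ℝ) (V : Set (ℝ × ℝ)) (n : ℕ) : Prop :=
  (∀ p ∈ V, Function.minimalPeriod (f p.1) p.2 ≤ n) ∧
  (∃ p ∈ V, Function.minimalPeriod (f p.1) p.2 = n)

lemma iterContOn (f : ℝ → ℝ → ℝ)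
    (hc : ContinuousOn (fun p : ℝ × ℝ => f p.1 p.2) (Set.Icc (0:ℝ) 1 ×ˢ Set.univ)) :
    ∀ k : ℕ, ContinuousOn (fun p : ℝ × ℝ => (f p.1)^[k] p.2)
      (Set.Icc (0:ℝ) 1 ×ˢ Set.univ) := by
  intro k
  induction k with
  | zero => simpa using (continuousOn_snd : ContinuousOn (fun p : ℝ × ℝ => p.2) _)
  | succ k ih =>
    have heq : (fun p : ℝ × ℝ => (f p.1)^[k+1] p.2)
        = (fun p : ℝ × ℝ => f p.1 p.2) ∘ fun p : ℝ × ℝ => (p.1, (f p.1)^[k] p.2) := by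
      funext p
      simp [Function.iterate_succ_apply', Function.comp]
    rw [heq]
    exact hc.comp (continuousOn_fst.prodMk ih) fun p hp => ⟨hp.1, trivial⟩

lemma iterHasDerivAt (g : ℝ → ℝ) (hg : Differentiable ℝ g) (k : ℕ) (x : ℝ) :
    HasDerivAt (g^[k]) (∏ i ∈ Finset.range k, deriv g (g^[i] x)) x := by
  induction k with
  | zero => simpa using hasDerivAt_id x
  | succ k ih =>
    rw [Function.iterate_succ', Finset.prod_range_succ, mul_comm]
    exact ((hg (g^[k] x)).hasDerivAt).comp x ih

lemma iterDerivEq (g : ℝ → ℝ) (hg : Differentiable ℝ g) (k : ℕ) (x : ℝ) :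
    deriv (g^[k]) x = ∏ i ∈ Finset.range k, deriv g (g^[i] x) :=
  (iterHasDerivAt g hg k x).deriv

lemma iterDerivContOn (f : ℝ → ℝ → ℝ)
    (hc : ContinuousOn (fun p : ℝ × ℝ => f p.1 p.2) (Set.Icc (0:ℝ) 1 ×ˢ Set.univ))
    (hdc : ContinuousOn (fun p : ℝ × ℝ => deriv (f p.1) p.2) (Set.Icc (0:ℝ) 1 ×ˢ Set.univ))
    (hdiff : ∀ t ∈ Set.Icc (0:ℝ) 1, Differentiable ℝ (f t)) (k : ℕ) :
    ContinuousOn (fun p : ℝ × ℝ => deriv ((f p.1)^[k]) p.2)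
      (Set.Icc (0:ℝ) 1 ×ˢ Set.univ) := by
  have hprod : ContinuousOn
      (fun p : ℝ × ℝ => ∏ i ∈ Finset.range k, deriv (f p.1) ((f p.1)^[i] p.2))
      (Set.Icc (0:ℝ) 1 ×ˢ Set.univ) := by
    apply continuousOn_finset_prod
    intro i _
    have heq : (fun p : ℝ × ℝ => deriv (f p.1) ((f p.1)^[i] p.2))
        = (fun p : ℝ × ℝ => deriv (f p.1) p.2) ∘ fun p : ℝ × ℝ => (p.1, (f p.1)^[i] p.2) := rfl
    rw [heq]
    exact hdc.comp (continuousOn_fst.prodMk (iterContOn f hc i)) fun p hp => ⟨hp.1, trivial⟩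
  exact hprod.congr fun p hp => iterDerivEq _ (hdiff p.1 hp.1) k p.2

lemma abs_sub_le_of_mem_uIcc {a b c ξ : ℝ} (h : ξ ∈ Set.uIcc a b) :
    |ξ - c| ≤ |a - c| + |b - c| := by
  rw [Set.mem_uIcc] at h
  have A1 := le_abs_self (a - c); have A2 := neg_abs_le (a - c)
  have B1 := le_abs_self (b - c); have B2 := neg_abs_le (b - c)
  have A0 := abs_nonneg (a - c); have B0 := abs_nonneg (b - c)
  rw [abs_sub_le_iff]
  rcases h with ⟨h1, h2⟩ | ⟨h1, h2⟩ <;> constructor <;> linarith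

lemma gmap_even_eq (f : ℝ → ℝ → ℝ) (m : ℕ) (hodd : ¬ Odd m) (hm : m = m / 2 + m / 2)
    (t x : ℝ) (hdiff : Differentiable ℝ (f t)) :
    ∃ ξ ∈ Set.uIcc x ((f t)^[m / 2] x),
      Gmap f m t x = deriv ((f t)^[m / 2]) ξ + 1 := by
  by_cases hfix : (f t)^[m / 2] x = x
  · exact ⟨x, Set.left_mem_uIcc, by simp [Gmap, hodd, hfix]⟩
  · set g := (f t)^[m / 2] with hg
    have hgd : Differentiable ℝ g := fun z => (iterHasDerivAt (f t) hdiff _ z).differentiableAt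
    have hiter : (f t)^[m] x = g (g x) := by
      conv_lhs => rw [hm]
      rw [Function.iterate_add_apply]
    set y := g x with hy
    have hxy : y ≠ x := hfix
    have key : ∃ ξ ∈ Set.uIcc x y, deriv g ξ = (g y - g x) / (y - x) := by
      rcases lt_or_gt_of_ne (Ne.symm hxy) with h | h
      · obtain ⟨c, hc, hcd⟩ := exists_deriv_eq_slope g h hgd.continuous.continuousOn
          hgd.differentiableOn
        exact ⟨c, Set.Icc_subset_uIcc (Set.Ioo_subset_Icc_self hc), hcd⟩
      · obtain ⟨c, hc, hcd⟩ := exists_deriv_eq_slope g h hgd.continuous.continuousOn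
          hgd.differentiableOn
        refine ⟨c, Set.Icc_subset_uIcc' (Set.Ioo_subset_Icc_self hc), ?_⟩
        rw [hcd, ← neg_sub (g x) (g y), ← neg_sub x y, neg_div_neg_eq]
    obtain ⟨ξ, hξ, hξd⟩ := key
    refine ⟨ξ, hξ, ?_⟩
    have hG : Gmap f m t x = (g (g x) - x) / (g x - x) := by
      simp only [Gmap, if_neg hodd, if_neg (show ¬ (f t)^[m / 2] x = x from hfix), hiter] <;> rfl
    rw [hG, hξd, ← hy]
    have hne : y - x ≠ 0 := sub_ne_zero.mpr hxy
    field_simp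
    ring

/-- For a continuous full family of `C¹` unimodal maps, the quotient
map `G_m` is continuous on `[0,1] × ℝ` for every positive integer `m`. -/
theorem stmt1 (f : ℝ → ℝ → ℝ) (hf : ContFullFamily f) (m : ℕ) (hm : 0 < m) :
    ContinuousOn (fun p : ℝ × ℝ => Gmap f m p.1 p.2)
      (Set.Icc (0 : ℝ) 1 ×ˢ Set.univ) := by
  obtain ⟨huni, hc, hdc, -, -, -⟩ := hf
  have hdiff : ∀ t ∈ Set.Icc (0:ℝ) 1, Differentiable ℝ (f t) :=
    fun t ht => (huni t ht).1.differentiable one_ne_zero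
  by_cases hodd : Odd m
  · have heq : (fun p : ℝ × ℝ => Gmap f m p.1 p.2)
        = fun p : ℝ × ℝ => (f p.1)^[m] p.2 - p.2 := by
      funext p; simp [Gmap, hodd]
    rw [heq]
    exact (iterContOn f hc m).sub continuousOn_snd
  · -- even case
    have hm2 : m = m / 2 + m / 2 := by
      rcases Nat.even_or_odd m with he | ho
      · obtain ⟨k, hk⟩ := he; omega
      · exact absurd ho hodd
    intro p₀ hp₀
    by_cases hfix : (f p₀.1)^[m / 2] p₀.2 = p₀.2
    · -- fixed point of f^[n]: removable singularity
      rw [Metric.continuousWithinAt_iff]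
      intro ε hε
      have hD : ContinuousWithinAt (fun p : ℝ × ℝ => deriv ((f p.1)^[m / 2]) p.2)
          (Set.Icc (0:ℝ) 1 ×ˢ Set.univ) p₀ :=
        (iterDerivContOn f hc hdc hdiff (m / 2)) p₀ hp₀
      obtain ⟨δ₁, hδ₁, hD'⟩ := Metric.continuousWithinAt_iff.mp hD ε hε
      have hg : ContinuousWithinAt (fun p : ℝ × ℝ => (f p.1)^[m / 2] p.2)
          (Set.Icc (0:ℝ) 1 ×ˢ Set.univ) p₀ := (iterContOn f hc (m / 2)) p₀ hp₀
      obtain ⟨δ₂, hδ₂, hg'⟩ := Metric.continuousWithinAt_iff.mp hg (δ₁ / 2) (by positivity)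
      refine ⟨min δ₂ (δ₁ / 2), by positivity, ?_⟩
      intro q hq hqd
      obtain ⟨ξ, hξ, hGq⟩ := gmap_even_eq f m hodd hm2 q.1 q.2 (hdiff q.1 hq.1)
      have hG₀ : Gmap f m p₀.1 p₀.2 = deriv ((f p₀.1)^[m / 2]) p₀.2 + 1 := by
        simp [Gmap, hodd, hfix]
      have hsnd : dist q.2 p₀.2 ≤ dist q p₀ := by
        rw [Prod.dist_eq]; exact le_max_right _ _
      have hfst : dist q.1 p₀.1 ≤ dist q p₀ := by
        rw [Prod.dist_eq]; exact le_max_left _ _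
      have h2 : dist ((f q.1)^[m / 2] q.2) p₀.2 < δ₁ / 2 := by
        have := hg' hq (lt_of_lt_of_le hqd (min_le_left _ _))
        rwa [hfix] at this
      have hξd : dist ξ p₀.2 < δ₁ := by
        have hb := abs_sub_le_of_mem_uIcc (c := p₀.2) hξ
        rw [Real.dist_eq] at hsnd h2 ⊢
        have h1 : |q.2 - p₀.2| < δ₁ / 2 :=
          lt_of_le_of_lt hsnd (lt_of_lt_of_le hqd (min_le_right _ _))
        linarith
      have hmem : ((q.1, ξ) : ℝ × ℝ) ∈ Set.Icc (0:ℝ) 1 ×ˢ Set.univ := ⟨hq.1, trivial⟩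
      have hdist : dist ((q.1, ξ) : ℝ × ℝ) p₀ < δ₁ := by
        rw [Prod.dist_eq]
        apply max_lt
        · calc dist q.1 p₀.1 ≤ dist q p₀ := hfst
            _ < min δ₂ (δ₁ / 2) := hqd
            _ ≤ δ₁ / 2 := min_le_right _ _
            _ < δ₁ := by linarith
        · exact hξd
      have hfin := hD' hmem hdist
      have : dist (Gmap f m q.1 q.2) (Gmap f m p₀.1 p₀.2)
          = dist (deriv ((f q.1)^[m / 2]) ξ) (deriv ((f p₀.1)^[m / 2]) p₀.2) := by
        rw [hGq, hG₀, Real.dist_eq, Real.dist_eq, add_sub_add_right_eq_sub]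
      rw [this]
      exact hfin
    · -- off the fixed set: quotient of continuous functions
      have hden : ContinuousWithinAt (fun p : ℝ × ℝ => (f p.1)^[m / 2] p.2 - p.2)
          (Set.Icc (0:ℝ) 1 ×ˢ Set.univ) p₀ :=
        (((iterContOn f hc (m / 2)).sub continuousOn_snd)) p₀ hp₀
      have hq : ContinuousWithinAt
          (fun p : ℝ × ℝ => ((f p.1)^[m] p.2 - p.2) / ((f p.1)^[m / 2] p.2 - p.2))
          (Set.Icc (0:ℝ) 1 ×ˢ Set.univ) p₀ :=
        (((iterContOn f hc m).sub continuousOn_snd) p₀ hp₀).div hden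
          (sub_ne_zero.mpr hfix)
      apply hq.congr_of_eventuallyEq
      · have hev : ∀ᶠ p : ℝ × ℝ in nhdsWithin p₀ (Set.Icc (0:ℝ) 1 ×ˢ Set.univ),
            (f p.1)^[m / 2] p.2 - p.2 ≠ 0 := hden.eventually_ne (sub_ne_zero.mpr hfix)
        filter_upwards [hev] with p hp
        have hne : (f p.1)^[m / 2] p.2 ≠ p.2 := sub_ne_zero.mp hp
        simp [Gmap, hodd, hne]
      · simp [Gmap, hodd, hfix]
end

section
/- Let {f_t}_{t∈[0,1]} be a continuous full family of C¹ unimodal maps, let V be a periodic point component of G_{2n}^{−1}(0) of period 2n, and let V_n = {(t,x) ∈ V : f_t^n(x) = x}. Then (1) (f_t^n)′(x) = −1 for every (t,x) ∈ V_n, and (2) for every t ∈ [0,1], the slice V_n ∩ ({t} × ℝ) is a finite set. -/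
lemma iterate_contDiff' {f : ℝ → ℝ} (hf : ContDiff ℝ 1 f) :
    ∀ n : ℕ, ContDiff ℝ 1 (f^[n])
  | 0 => contDiff_id
  | (n+1) => by
      rw [Function.iterate_succ']
      exact hf.comp (iterate_contDiff' hf n)

lemma periodic_bound' {f : ℝ → ℝ} (hc : Continuous f)
    (hmax : ∀ y, f y ≤ f 0) (hmono : MonotoneOn f (Set.Iic 0))
    (hanti : AntitoneOn f (Set.Ici 0)) {M : ℝ} (hM : 0 < M)
    (hfix : ∀ x, f x = x → x ∈ Set.Icc (-M) M)
    {n : ℕ} (hn : 0 < n) {x : ℝ} (hx : f^[n] x = x) :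
    min (f (f 0)) (f (-M)) ≤ x ∧ x ≤ f 0 := by
  set O : Finset ℝ := (Finset.range n).image (fun k => f^[k] x) with hO
  have hxO : x ∈ O := Finset.mem_image.2 ⟨0, Finset.mem_range.2 hn, rfl⟩
  have hne : O.Nonempty := ⟨x, hxO⟩
  have hstep : ∀ y ∈ O, f y ∈ O := by
    intro y hy
    obtain ⟨k, hk, rfl⟩ := Finset.mem_image.1 hy
    rcases eq_or_lt_of_le (Nat.succ_le_of_lt (Finset.mem_range.1 hk)) with h | h
    · have hfy : f (f^[k] x) = x := by
        rw [← Function.iterate_succ_apply' f k x, h, hx]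
      rw [hfy]; exact hxO
    · exact Finset.mem_image.2 ⟨k+1, Finset.mem_range.2 h,
        (Function.iterate_succ_apply' f k x)⟩
  have hpre : ∀ y ∈ O, ∃ z ∈ O, f z = y := by
    intro y hy
    obtain ⟨k, hk, rfl⟩ := Finset.mem_image.1 hy
    rcases Nat.eq_zero_or_pos k with rfl | hk0
    · refine ⟨f^[n-1] x, Finset.mem_image.2 ⟨n-1, Finset.mem_range.2 (by omega), rfl⟩, ?_⟩
      rw [← Function.iterate_succ_apply' f (n-1) x]
      have h1 : (n - 1).succ = n := by omega
      rw [h1]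
      simpa using hx
    · have hkn := Finset.mem_range.1 hk
      refine ⟨f^[k-1] x, Finset.mem_image.2 ⟨k-1, Finset.mem_range.2 (by omega), rfl⟩, ?_⟩
      rw [← Function.iterate_succ_apply' f (k-1) x]
      congr 1
      omega
  have hub : ∀ y ∈ O, y ≤ f 0 := by
    intro y hy
    obtain ⟨z, hz, rfl⟩ := hpre y hy
    exact hmax z
  set m := O.min' hne with hm
  have hmO : m ∈ O := O.min'_mem hne
  have hmin : ∀ y ∈ O, m ≤ y := fun y hy => O.min'_le y hy
  obtain ⟨z, hzO, hzm⟩ := hpre m hmO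
  have hzle : z ≤ f 0 := hub z hzO
  have hmle : m ≤ z := hmin z hzO
  have hlow : min (f (f 0)) (f (-M)) ≤ m := by
    rcases le_or_gt 0 z with hz0 | hz0
    · have h1 : f (f 0) ≤ f z :=
        hanti (Set.mem_Ici.2 hz0) (Set.mem_Ici.2 (le_trans hz0 hzle)) hzle
      rw [hzm] at h1
      exact le_trans (min_le_left _ _) h1
    · rcases le_or_gt (-M) z with hMz | hMz
      · have h1 : f (-M) ≤ f z :=
          hmono (Set.mem_Iic.2 (by linarith)) (Set.mem_Iic.2 hz0.le) hMz
        rw [hzm] at h1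
        exact le_trans (min_le_right _ _) h1
      · exfalso
        have hfzne : f z ≠ z := fun h => by
          have := (hfix z h).1; linarith
        have hfz : f z < z := lt_of_le_of_ne (hzm ▸ hmle) hfzne
        have hfmne : f m ≠ m := fun h => by
          have := (hfix m h).1; linarith
        have hfm : m < f m := lt_of_le_of_ne (hmin _ (hstep m hmO)) (Ne.symm hfmne)
        have hcont : ContinuousOn (fun w => f w - w) (Set.Icc m z) :=
          (hc.sub continuous_id).continuousOn
        have h0mem : (0:ℝ) ∈ Set.Icc (f z - z) (f m - m) := ⟨by linarith, by linarith⟩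
        obtain ⟨c, hcmem, hc0⟩ := intermediate_value_Icc' hmle hcont h0mem
        have hcfix : f c = c := by
          have : f c - c = 0 := hc0
          linarith
        have := (hfix c hcfix).1
        have hcz : c ≤ z := hcmem.2
        linarith
  exact ⟨le_trans hlow (hmin x hxO), hub x hxO⟩

/-- Let `V` be a periodic point component of `G_{2n}⁻¹(0)` of period
`2n` and `V_n = {(t,x) ∈ V | f_t^n x = x}`.  Then `(f_t^n)' x = -1` on `V_n`, and
each slice `V_n ∩ ({t} × ℝ)` is finite. -/
theorem stmt2 (f : ℝ → ℝ → ℝ) (hf : ContFullFamily f) (n : ℕ) (hn : 0 < n)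
    (V : Set (ℝ × ℝ)) (hV : IsPPComponent f (2 * n) V)
    (hVper : CompPeriod f V (2 * n)) :
    (∀ p ∈ V, (f p.1)^[n] p.2 = p.2 → deriv ((f p.1)^[n]) p.2 = -1) ∧
    (∀ t : ℝ, {x : ℝ | (t, x) ∈ V ∧ (f t)^[n] x = x}.Finite) := by
  obtain ⟨q, hq, hVeq⟩ := hV
  have hVZ : V ⊆ Zset f (2*n) := hVeq ▸ connectedComponentIn_subset _ _
  have h2 : ¬ Odd (2*n) := by rw [Nat.odd_iff]; omega
  have hdiv : 2*n/2 = n := by omega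
  have part1 : ∀ p ∈ V, (f p.1)^[n] p.2 = p.2 → deriv ((f p.1)^[n]) p.2 = -1 := by
    intro p hp hfixp
    have hG := (hVZ hp).2
    simp only [Gmap, if_neg h2, hdiv] at hG
    rw [if_pos hfixp] at hG
    linarith
  refine ⟨part1, ?_⟩
  intro t
  by_cases ht : t ∈ Set.Icc (0:ℝ) 1
  swap
  · refine Set.Finite.subset Set.finite_empty ?_
    intro x hx
    exact absurd (hVZ hx.1).1 ht
  obtain ⟨huni, hcont, hcontd, hnofix, hhorse, M, hM, hfixM⟩ := hf
  obtain ⟨hC1, hdpos, hdneg, hd0⟩ := huni t ht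
  set g := (f t)^[n] with hg
  have hgC1 : ContDiff ℝ 1 g := iterate_contDiff' hC1 n
  have hgc : Continuous g := hgC1.continuous
  have hgd : Continuous (deriv g) := hgC1.continuous_deriv le_rfl
  have hfc : Continuous (f t) := hC1.continuous
  have hmono : MonotoneOn (f t) (Set.Iic 0) := by
    refine (strictMonoOn_of_deriv_pos (convex_Iic 0) hfc.continuousOn ?_).monotoneOn
    intro x hx
    rw [interior_Iic] at hx
    exact hdpos x hx
  have hanti : AntitoneOn (f t) (Set.Ici 0) := by
    refine (strictAntiOn_of_deriv_neg (convex_Ici 0) hfc.continuousOn ?_).antitoneOn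
    intro x hx
    rw [interior_Ici] at hx
    exact hdneg x hx
  have hmax : ∀ y, f t y ≤ f t 0 := by
    intro y
    rcases le_total y 0 with h | h
    · exact hmono (Set.mem_Iic.2 h) (Set.mem_Iic.2 le_rfl) h
    · exact hanti (Set.mem_Ici.2 le_rfl) (Set.mem_Ici.2 h) h
  set S := {x : ℝ | (t, x) ∈ V ∧ (f t)^[n] x = x} with hS
  by_contra hinf
  have hinf' : S.Infinite := hinf
  have hb : Bornology.IsBounded S := by
    apply (Metric.isBounded_Icc (min (f t (f t 0)) (f t (-M))) (f t 0)).subset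
    intro x hx
    exact periodic_bound' hfc hmax hmono hanti hM (hfixM t ht) hn hx.2
  set emb := hinf'.natEmbedding with hemb
  set u : ℕ → ℝ := fun k => (emb k : ℝ) with hu
  have huS : ∀ k, u k ∈ S := fun k => (emb k).2
  have huinj : Function.Injective u := fun a b h => emb.injective (Subtype.ext h)
  obtain ⟨x₀, -, φ, hφ, hlim⟩ := tendsto_subseq_of_bounded hb huS
  set y : ℕ → ℝ := u ∘ φ with hy
  have hyinj : Function.Injective y := huinj.comp hφ.injective
  have hyS : ∀ k, y k ∈ S := fun k => huS (φ k)
  have hgy : ∀ k, g (y k) = y k := fun k => (hyS k).2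
  have hgx0 : g x₀ = x₀ := by
    have h1 : Filter.Tendsto (fun k => g (y k)) Filter.atTop (nhds (g x₀)) :=
      (hgc.tendsto x₀).comp hlim
    have h2 : Filter.Tendsto (fun k => g (y k)) Filter.atTop (nhds x₀) := by
      simpa only [hgy] using hlim
    exact tendsto_nhds_unique h1 h2
  have hd1 : deriv g x₀ = -1 := by
    have h1 : Filter.Tendsto (fun k => deriv g (y k)) Filter.atTop (nhds (deriv g x₀)) :=
      (hgd.tendsto x₀).comp hlim
    have h2 : ∀ k, deriv g (y k) = -1 := fun k => part1 (t, y k) (hyS k).1 (hyS k).2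
    simp only [h2] at h1
    exact tendsto_nhds_unique h1 tendsto_const_nhds
  have hney : ∀ᶠ k in Filter.atTop, y k ≠ x₀ := by
    by_contra h
    rw [Filter.not_eventually] at h
    obtain ⟨k₁, -, he₁⟩ := (Filter.frequently_atTop.1 h) 0
    obtain ⟨k₂, hk₂, he₂⟩ := (Filter.frequently_atTop.1 h) (k₁+1)
    rw [not_not] at he₁ he₂
    have : k₁ = k₂ := hyinj (by rw [he₁, he₂])
    omega
  have hderiv : HasDerivAt g (deriv g x₀) x₀ := ((hgC1.differentiable one_ne_zero) x₀).hasDerivAt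
  have hslope := hasDerivAt_iff_tendsto_slope.1 hderiv
  have hyt : Filter.Tendsto y Filter.atTop (nhdsWithin x₀ {x₀}ᶜ) := by
    rw [tendsto_nhdsWithin_iff]
    exact ⟨hlim, hney.mono fun k hk => Set.mem_compl_singleton_iff.2 hk⟩
  have hcomp : Filter.Tendsto (fun k => slope g x₀ (y k)) Filter.atTop (nhds (deriv g x₀)) :=
    hslope.comp hyt
  have hone : Filter.Tendsto (fun k => slope g x₀ (y k)) Filter.atTop (nhds 1) := by
    have hev : ∀ᶠ k in Filter.atTop, slope g x₀ (y k) = 1 := by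
      refine hney.mono fun k hk => ?_
      rw [slope_def_field, hgy k, hgx0]
      exact div_self (sub_ne_zero.2 hk)
    exact Filter.Tendsto.congr' (hev.mono fun k hk => hk.symm) tendsto_const_nhds
  have : deriv g x₀ = 1 := tendsto_nhds_unique hcomp hone
  linarith
end

section
/- Let A be a maximal periodic admissible sequence of minimal period n. Then the sequence Ã of period n obtained from A by flipping the symbol at every position congruent to n−1 modulo n (i.e., whose first n symbols are A_0 ⋯ A_{n−2} followed by the flip of A_{n−1}) is also a maximal sequence. -/
/-- Admissible sequences are functions `ℕ → Bool`, with `false = L`, `true = R`.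
`shiftSeq k A` is the `k`-fold shift `S^k A`. -/
def shiftSeq (k : ℕ) (A : ℕ → Bool) : ℕ → Bool := fun i => A (i + k)

/-- The block `A_0 ⋯ A_{n-1}` is even: it contains an even number of `R`'s. -/
def BlockEven (A : ℕ → Bool) (n : ℕ) : Prop :=
  Even ((Finset.range n).filter fun i => A i = true).card

/-- The order on admissible sequences: `A < B` iff at the first index `n` of
disagreement, either `A_0 ⋯ A_{n-1}` is even and `A n = L < R = B n`, or it is
odd and `A n = R > L = B n`. -/
def SeqLT (A B : ℕ → Bool) : Prop :=
  ∃ n : ℕ, (∀ i < n, A i = B i) ∧ A n ≠ B n ∧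
    ((BlockEven A n ∧ A n = false ∧ B n = true) ∨
     (¬ BlockEven A n ∧ A n = true ∧ B n = false))

def SeqLE (A B : ℕ → Bool) : Prop := SeqLT A B ∨ A = B

/-- `A` is maximal: `S^k A ≤ A` for all `k ≥ 0`. -/
def SeqMaximal (A : ℕ → Bool) : Prop := ∀ k : ℕ, SeqLE (shiftSeq k A) A

/-- `A` is periodic of period `n > 0`. -/
def IsPeriodicSeq (A : ℕ → Bool) (n : ℕ) : Prop := 0 < n ∧ ∀ i, A (i + n) = A i

/-- The minimal period of `A` (and `0` if `A` is not periodic). -/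
noncomputable def minPer (A : ℕ → Bool) : ℕ := sInf {n : ℕ | IsPeriodicSeq A n}

/-- Flip (`L ↔ R`) the symbol of `A` at every position congruent to `n - 1`
modulo `n`. -/
def flipAt (n : ℕ) (A : ℕ → Bool) : ℕ → Bool :=
  fun i => if i % n = n - 1 then !(A i) else A i

/-- The map `μ` on periodic admissible sequences: if `n` is the minimal period of
`A` and `m` (with `0 ≤ m ≤ n-1`) is the unique integer such that `S^m A` is
maximal, then `μ A = S^{n-m} B`, where `B` is obtained from `S^m A` by flipping
the symbol at every position congruent to `n - 1` modulo `n`. -/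
noncomputable def muSeq (A : ℕ → Bool) : ℕ → Bool :=
  shiftSeq (minPer A - sInf {m : ℕ | SeqMaximal (shiftSeq m A)})
    (flipAt (minPer A)
      (shiftSeq (sInf {m : ℕ | SeqMaximal (shiftSeq m A)}) A))

/-- The map `ν`: `ν A = μ A` if `per (μ A) = per A`, and `ν A = S^{per A / 2} A`
otherwise. -/
noncomputable def nuSeq (A : ℕ → Bool) : ℕ → Bool :=
  if minPer (muSeq A) = minPer A then muSeq A else shiftSeq (minPer A / 2) A

def cnt (X : ℕ → Bool) (c : ℕ) : ℕ := ∑ i ∈ Finset.range c, (if X i = true then 1 else 0)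

lemma cnt_succ (X : ℕ → Bool) (c : ℕ) :
    cnt X (c+1) = cnt X c + (if X c = true then 1 else 0) := Finset.sum_range_succ _ _

lemma cnt_congr {X Y : ℕ → Bool} {c : ℕ} (h : ∀ i < c, X i = Y i) : cnt X c = cnt Y c :=
  Finset.sum_congr rfl fun i hi => by rw [h i (Finset.mem_range.mp hi)]

lemma cnt_add (X : ℕ → Bool) (a b : ℕ) :
    cnt X (a+b) = cnt X a + cnt (fun i => X (a+i)) b := Finset.sum_range_add _ _ _

lemma blockEven_iff (X : ℕ → Bool) (c : ℕ) : BlockEven X c ↔ Even (cnt X c) := by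
  unfold BlockEven cnt
  rw [Finset.card_filter]

lemma seqLT_iff (X Y : ℕ → Bool) : SeqLT X Y ↔
    ∃ d, (∀ i < d, X i = Y i) ∧ X d ≠ Y d ∧ Even (cnt X (d+1)) := by
  constructor
  · rintro ⟨d, h1, h2, (⟨he, hx, _⟩ | ⟨he, hx, _⟩)⟩ <;>
      refine ⟨d, h1, h2, ?_⟩ <;> rw [blockEven_iff] at he <;>
      rw [cnt_succ, hx, Nat.even_iff] at * <;> simp at * <;> omega
  · rintro ⟨d, h1, h2, he⟩
    refine ⟨d, h1, h2, ?_⟩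
    rw [cnt_succ] at he
    cases hx : X d with
    | false =>
      left
      have hy : Y d = true := by cases hy : Y d <;> simp_all
      rw [hx] at he; simp at he
      exact ⟨(blockEven_iff X d).mpr he, rfl, hy⟩
    | true =>
      right
      have hy : Y d = false := by cases hy : Y d <;> simp_all
      rw [hx] at he; simp at he
      refine ⟨fun hc => ?_, rfl, hy⟩
      rw [blockEven_iff, Nat.even_iff] at hc
      rw [Nat.even_iff] at he; omega

lemma ext_periodic {B : ℕ → Bool} {n k : ℕ} (hn : 0 < n) (hB : ∀ i, B (i+n) = B i)
    (h : ∀ i < n, B (i+k) = B i) : ∀ i, B (i+k) = B i := by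
  intro i
  induction i using Nat.strong_induction_on with
  | _ i ih =>
    rcases Nat.lt_or_ge i n with hi | hi
    · exact h i hi
    · have h1 : i + k = (i - n + k) + n := by omega
      have h2 : i - n + n = i := by omega
      rw [h1, hB, ih (i-n) (by omega)]
      conv_rhs => rw [← h2]
      rw [hB]

lemma per_mod {B : ℕ → Bool} {n : ℕ} (hn : 0 < n) (hB : ∀ i, B (i+n) = B i) :
    ∀ x, B x = B (x % n) := by
  intro x
  induction x using Nat.strong_induction_on with
  | _ x ih =>
    rcases Nat.lt_or_ge x n with hx | hx
    · rw [Nat.mod_eq_of_lt hx]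
    · have h1 : x - n + n = x := by omega
      have h2 := hB (x - n)
      rw [h1] at h2
      rw [h2, ih (x - n) (by omega), Nat.mod_eq_sub_mod hx]

lemma per_mul {B : ℕ → Bool} {n : ℕ} (hB : ∀ i, B (i+n) = B i) :
    ∀ q x, B (x + n * q) = B x := by
  intro q
  induction q with
  | zero => simp
  | succ q ih =>
    intro x
    have h1 : x + n * (q+1) = (x + n * q) + n := by ring
    rw [h1, hB, ih]

lemma shift_mod {B : ℕ → Bool} {n : ℕ} (hB : ∀ i, B (i+n) = B i) (k : ℕ) :
    shiftSeq k B = shiftSeq (k % n) B := by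
  funext i
  show B (i + k) = B (i + k % n)
  conv_lhs => rw [← Nat.mod_add_div k n]
  rw [← Nat.add_assoc, per_mul hB]

lemma sum_rot1 {M : Type*} [AddCommMonoid M] (n : ℕ) (h : ℕ → M) :
    ∑ i ∈ Finset.range n, h ((i + 1) % n) = ∑ i ∈ Finset.range n, h (i % n) := by
  cases n with
  | zero => simp
  | succ n' =>
    rw [Finset.sum_range_succ, Finset.sum_range_succ' (fun i => h (i % (n'+1)))]
    simp only [Nat.mod_self, Nat.zero_mod]

lemma sum_rot {M : Type*} [AddCommMonoid M] (n : ℕ) (g : ℕ → M) (k : ℕ) :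
    ∑ i ∈ Finset.range n, g ((i + k) % n) = ∑ i ∈ Finset.range n, g (i % n) := by
  induction k with
  | zero => simp
  | succ k ih =>
    have h2 := sum_rot1 n (fun j => g ((j + k) % n))
    simp only [Nat.mod_add_mod] at h2
    calc ∑ i ∈ Finset.range n, g ((i + (k+1)) % n)
        = ∑ i ∈ Finset.range n, g ((i + 1 + k) % n) := by
          apply Finset.sum_congr rfl; intro i _
          have h3 : i + (k+1) = i + 1 + k := by omega
          rw [h3]
      _ = ∑ i ∈ Finset.range n, g ((i + k) % n) := h2
      _ = _ := ih

lemma bool_ne {a b : Bool} (h : a ≠ b) : a = !b := by cases a <;> cases b <;> simp_all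


lemma flip_eq (n : ℕ) (A : ℕ → Bool) {x : ℕ} (h : x % n ≠ n - 1) : flipAt n A x = A x := if_neg h
lemma flip_ne (n : ℕ) (A : ℕ → Bool) {x : ℕ} (h : x % n = n - 1) : flipAt n A x = !(A x) := if_pos h

/-- If `A` is a maximal periodic admissible sequence of minimal
period `n`, then the sequence obtained by flipping the symbol at every position
congruent to `n - 1` modulo `n` is also maximal. -/
theorem stmt3 (A : ℕ → Bool) (n : ℕ) (hn : 0 < n) (hper : minPer A = n)
    (hmax : SeqMaximal A) :
    SeqMaximal (flipAt n A) := by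
  -- basic periodicity facts
  have hSne : {m | IsPeriodicSeq A m}.Nonempty := by
    by_contra h
    rw [Set.not_nonempty_iff_eq_empty] at h
    rw [minPer, h, Nat.sInf_empty] at hper
    omega
  have hAper : IsPeriodicSeq A n := by
    have h := Nat.sInf_mem hSne
    rw [← minPer, hper] at h
    exact h
  have hA : ∀ i, A (i + n) = A i := hAper.2
  have hmin : ∀ k, 0 < k → k < n → shiftSeq k A ≠ A := by
    intro k hk0 hkn h
    have h1 : IsPeriodicSeq A k := ⟨hk0, fun i => congrFun h i⟩
    have h2 : minPer A ≤ k := Nat.sInf_le h1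
    omega
  have hFper : ∀ i, flipAt n A (i + n) = flipAt n A i := by
    intro i
    unfold flipAt
    rw [Nat.add_mod_right, hA]
  intro k
  rw [shift_mod hFper k]
  rcases Nat.eq_zero_or_pos (k % n) with h0 | hk0'
  · right; rw [h0]; funext i; rfl
  have hkn' : k % n < n := Nat.mod_lt _ hn
  set k' := k % n with hk'
  rename' hk0' => hk0, hkn' => hkn
  -- strict comparison of S^k' A with A
  have hlt : SeqLT (shiftSeq k' A) A := by
    rcases hmax k' with h | h
    · exact h
    · exact absurd h (hmin k' hk0 hkn)
  obtain ⟨m, hag, hne, hpar⟩ := (seqLT_iff _ _).mp hlt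
  simp only [shiftSeq] at hag hne
  have hmn : m < n := by
    by_contra hge
    push_neg at hge
    exact hne (ext_periodic hn hA (fun i hi => hag i (by omega)) m)
  -- Lemma P : cnt A (m+1) is odd
  have hALodd : ¬ Even (cnt A (m+1)) := by
    intro hev
    have hcc : cnt (shiftSeq k' A) m = cnt A m := cnt_congr (fun i hi => hag i hi)
    have h1 : cnt (shiftSeq k' A) (m+1) = cnt A m + (if A (m + k') = true then 1 else 0) := by
      rw [cnt_succ, hcc]
      rfl
    rw [h1] at hpar
    rw [cnt_succ] at hev
    have h2 : A (m + k') = !(A m) := bool_ne hne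
    rw [h2] at hpar
    rw [Nat.even_iff] at hpar hev
    cases hAm : A m <;> rw [hAm] at hpar hev <;> simp at hpar hev <;> omega
  rcases lt_trichotomy (m + k' + 1) n with hcase | hcase | hcase
  -- ===== Case 1 : m + k' < n - 1 =====
  · left
    rw [seqLT_iff]
    have hsame : ∀ i < m + 1, shiftSeq k' (flipAt n A) i = shiftSeq k' A i := by
      intro i hi
      show flipAt n A (i + k') = A (i + k')
      exact flip_eq n A (by rw [Nat.mod_eq_of_lt (by omega)]; omega)
    refine ⟨m, ?_, ?_, ?_⟩
    · intro i hi
      show flipAt n A (i + k') = flipAt n A i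
      rw [flip_eq n A (by rw [Nat.mod_eq_of_lt (by omega)]; omega),
          flip_eq n A (by rw [Nat.mod_eq_of_lt (by omega)]; omega), hag i hi]
    · show flipAt n A (m + k') ≠ flipAt n A m
      rw [flip_eq n A (by rw [Nat.mod_eq_of_lt (by omega)]; omega),
          flip_eq n A (by rw [Nat.mod_eq_of_lt (by omega)]; omega)]
      exact hne
    · rw [cnt_congr hsame]
      exact hpar
  -- ===== Case 2 : m + k' = n - 1 =====
  · have hm2 : m + 1 ≤ n - 1 := by omega
    have hlts : SeqLT (shiftSeq (m+1) A) A := by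
      rcases hmax (m+1) with h | h
      · exact h
      · exact absurd h (hmin (m+1) (by omega) (by omega))
    obtain ⟨e, hagE, hneE, hparE⟩ := (seqLT_iff _ _).mp hlts
    simp only [shiftSeq] at hagE hneE
    have htr : ∀ i, m < i → A (i + k') = A (i - (m+1)) := by
      intro i hi
      have h1 : i + k' = (i - (m+1)) + n := by omega
      rw [h1, hA]
    -- parity of the segment A over [0, m+1) joined with shift info
    by_cases hE : ∃ i₀, m < i₀ ∧ i₀ < n - 1 ∧ A (i₀ + k') ≠ A i₀
    -- ---- Case 2a ----
    · obtain ⟨i₀, hi₀1, hi₀2, hi₀3⟩ := hE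
      have he_le : e ≤ i₀ - (m+1) := by
        by_contra hgt
        push_neg at hgt
        have h1 := hagE (i₀ - (m+1)) hgt
        have h2 : i₀ - (m+1) + (m+1) = i₀ := by omega
        rw [h2] at h1
        exact hi₀3 (by rw [htr i₀ hi₀1, h1])
      set d := (m+1) + e with hd
      have hdlt : d < n - 1 := by omega
      have hde : A (d + k') = A e := by
        rw [htr d (by omega)]
        congr 1
        omega
      have hdAd : A (d + k') = !(A d) := by
        rw [hde]
        have h5 : e + (m+1) = d := by omega
        rw [h5] at hneE
        cases hx : A e <;> cases hy : A d <;> simp_all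
      have hagF : ∀ i < d, flipAt n A (i + k') = flipAt n A i := by
        intro i hi
        rcases lt_trichotomy i m with h | h | h
        · rw [flip_eq n A (by rw [Nat.mod_eq_of_lt (by omega)]; omega),
              flip_eq n A (by rw [Nat.mod_eq_of_lt (by omega)]; omega), hag i h]
        · subst h
          rw [flip_ne n A (by rw [Nat.mod_eq_of_lt (by omega)]; omega),
              flip_eq n A (by rw [Nat.mod_eq_of_lt (by omega)]; omega)]
          rw [bool_ne hne, Bool.not_not]
        · have h3 : A (i + k') = A i := by
            rw [htr i h]
            have h4 := hagE (i - (m+1)) (by omega)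
            have h5 : i - (m+1) + (m+1) = i := by omega
            rw [h5] at h4
            exact h4.symm
          have hmod : (i + k') % n = i - (m+1) := by
            rw [Nat.mod_eq_sub_mod (by omega), Nat.mod_eq_of_lt (by omega)]
            omega
          rw [flip_eq n A (by rw [hmod]; omega),
              flip_eq n A (by rw [Nat.mod_eq_of_lt (by omega)]; omega), h3]
      have hvals : ∀ i < d, shiftSeq k' (flipAt n A) i = A i := by
        intro i hi
        show flipAt n A (i + k') = A i
        rw [hagF i hi, flip_eq n A (by rw [Nat.mod_eq_of_lt (by omega)]; omega)]
      left
      rw [seqLT_iff]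
      refine ⟨d, hagF, ?_, ?_⟩
      · show flipAt n A (d + k') ≠ flipAt n A d
        have hmod : (d + k') % n = e := by
          rw [Nat.mod_eq_sub_mod (by omega), Nat.mod_eq_of_lt (by omega)]
          omega
        rw [flip_eq n A (by rw [hmod]; omega),
            flip_eq n A (by rw [Nat.mod_eq_of_lt (by omega)]; omega), hdAd]
        exact Bool.not_ne_self _
      · -- parity
        have h6 : cnt (shiftSeq k' (flipAt n A)) (d+1)
            = cnt A d + (if (!(A d)) = true then 1 else 0) := by
          rw [cnt_succ, cnt_congr hvals]
          congr 1
          show (if flipAt n A (d + k') = true then 1 else 0) = _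
          rw [flip_eq n A (by
            rw [Nat.mod_eq_sub_mod (by omega), Nat.mod_eq_of_lt (by omega)]; omega), hdAd]
        -- cnt A (d+1) is odd
        have h7 : cnt A (d + 1) = cnt A (m+1) + cnt (shiftSeq (m+1) A) (e+1) := by
          have h8 : d + 1 = (m+1) + (e+1) := by omega
          rw [h8, cnt_add]
          congr 1
          apply cnt_congr
          intro u _
          show A ((m+1) + u) = A (u + (m+1))
          rw [Nat.add_comm]
        have h9 : ¬ Even (cnt A (d+1)) := by
          rw [h7]
          rw [Nat.even_iff] at hparE ⊢
          rw [Nat.even_iff] at hALodd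
          omega
        rw [h6]
        rw [cnt_succ] at h9
        rw [Nat.even_iff] at h9 ⊢
        cases hAd : A d <;> rw [hAd] at h9 <;> simp at h9 ⊢ <;> omega
    -- ---- Case 2b/2c : no disagreement strictly between m and n-1 ----
    · push_neg at hE
      by_cases hlast : A (k' - 1) = A (n - 1)
      -- Case 2b : impossible by counting
      · exfalso
        have hdis : ∀ i < n, i ≠ m → A (i + k') = A i := by
          intro i hi him
          rcases lt_trichotomy i m with h | h | h
          · exact hag i h
          · exact absurd h him
          · rcases Nat.lt_or_ge i (n-1) with h2 | h2
            · exact hE i h h2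
            · have h3 : i = n - 1 := by omega
              subst h3
              have h4 : (n-1) + k' = (k'-1) + n := by omega
              rw [h4, hA]
              exact hlast
        have hmem : m ∈ Finset.range n := Finset.mem_range.mpr hmn
        have hc : ∑ i ∈ Finset.range n, (if A (i+k') = true then (1:ℕ) else 0)
            = ∑ i ∈ Finset.range n, (if A i = true then (1:ℕ) else 0) := by
          calc ∑ i ∈ Finset.range n, (if A (i+k') = true then (1:ℕ) else 0)
              = ∑ i ∈ Finset.range n, (if A ((i+k') % n) = true then (1:ℕ) else 0) := by
                apply Finset.sum_congr rfl
                intro i _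
                rw [← per_mod hn hA]
            _ = ∑ i ∈ Finset.range n, (if A (i % n) = true then (1:ℕ) else 0) :=
                sum_rot n (fun x => if A x = true then (1:ℕ) else 0) k'
            _ = ∑ i ∈ Finset.range n, (if A i = true then (1:ℕ) else 0) := by
                apply Finset.sum_congr rfl
                intro i hi
                rw [Nat.mod_eq_of_lt (Finset.mem_range.mp hi)]
        rw [← Finset.add_sum_erase _ _ hmem, ← Finset.add_sum_erase _ (fun i => if A i = true then (1:ℕ) else 0) hmem] at hc
        have h2 : ∑ i ∈ (Finset.range n).erase m, (if A (i+k') = true then (1:ℕ) else 0)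
            = ∑ i ∈ (Finset.range n).erase m, (if A i = true then (1:ℕ) else 0) := by
          apply Finset.sum_congr rfl
          intro i hi
          obtain ⟨hne_i, hmem_i⟩ := Finset.mem_erase.mp hi
          rw [hdis i (Finset.mem_range.mp hmem_i) hne_i]
        rw [h2] at hc
        have h3 : (if A (m+k') = true then (1:ℕ) else 0) = (if A m = true then (1:ℕ) else 0) := by omega
        apply hne
        cases hx : A (m + k') <;> cases hy : A m <;> rw [hx, hy] at h3 <;> simp_all
      -- Case 2c : S^k' Ã = Ã
      · right
        funext i
        show flipAt n A (i + k') = flipAt n A i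
        have hbase : ∀ i < n, flipAt n A (i + k') = flipAt n A i := by
          intro i hi
          rcases lt_trichotomy i m with h | h | h
          · rw [flip_eq n A (by rw [Nat.mod_eq_of_lt (by omega)]; omega),
                flip_eq n A (by rw [Nat.mod_eq_of_lt (by omega)]; omega), hag i h]
          · subst h
            rw [flip_ne n A (by rw [Nat.mod_eq_of_lt (by omega)]; omega),
                flip_eq n A (by rw [Nat.mod_eq_of_lt (by omega)]; omega)]
            rw [bool_ne hne, Bool.not_not]
          · rcases Nat.lt_or_ge i (n-1) with h2 | h2
            · have hmod : (i + k') % n = i - (m+1) := by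
                rw [Nat.mod_eq_sub_mod (by omega), Nat.mod_eq_of_lt (by omega)]
                omega
              rw [flip_eq n A (by rw [hmod]; omega),
                  flip_eq n A (by rw [Nat.mod_eq_of_lt (by omega)]; omega), hE i h h2]
            · have h3 : i = n - 1 := by omega
              subst h3
              have hmod : (n - 1 + k') % n = k' - 1 := by
                rw [Nat.mod_eq_sub_mod (by omega), Nat.mod_eq_of_lt (by omega)]
                omega
              rw [flip_eq n A (by rw [hmod]; omega),
                  flip_ne n A (by rw [Nat.mod_eq_of_lt (by omega)])]
              have h4 : (n-1) + k' = (k'-1) + n := by omega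
              rw [h4, hA]
              exact bool_ne hlast
        exact ext_periodic hn hFper hbase i
  -- ===== Case 3 : n ≤ m + k' =====
  · have hnk : n - k' ≤ m := by omega
    have hq : ∀ x, x < n → A x = A (x % k') := by
      intro x
      induction x using Nat.strong_induction_on with
      | _ x ih =>
        intro hx
        rcases Nat.lt_or_ge x k' with h | h
        · rw [Nat.mod_eq_of_lt h]
        · have h1 : x - k' + k' = x := by omega
          have h2 := hag (x - k') (by omega)
          rw [h1] at h2
          rw [h2, ih (x - k') (by omega) (by omega), Nat.mod_eq_sub_mod h]
    have hrk : n % k' < k' := Nat.mod_lt _ hk0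
    have hdm : k' * (n / k') + n % k' = n := Nat.div_add_mod n k'
    have hq1 : 1 ≤ n / k' := (Nat.one_le_div_iff hk0).mpr (le_of_lt hkn)
    have hmul : k' * (n / k' - 1) + k' = k' * (n / k') := by
      rw [← Nat.mul_succ]
      congr 1
      omega
    have hr1 : 1 ≤ n % k' := by
      by_contra h0
      push_neg at h0
      have hr0 : n % k' = 0 := by omega
      obtain ⟨c, hc⟩ := Nat.dvd_of_mod_eq_zero hr0
      have hbase : ∀ i < n, A (i + k') = A i := by
        intro i hi
        rcases Nat.lt_or_ge (i + k') n with h | h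
        · exact hag i (by omega)
        · have h1 : i + k' = (i + k' - n) + n := by omega
          rw [h1, hA, hq _ (by omega), hq i hi]
          congr 1
          calc (i + k' - n) % k' = (i + k' - n + k' * c) % k' :=
                (Nat.add_mul_mod_self_left _ _ _).symm
            _ = (i + k') % k' := by congr 1; omega
            _ = i % k' := Nat.add_mod_right i k'
      exact hmin k' hk0 hkn (funext fun i => ext_periodic hn hA hbase i)
    have hrn : n % k' + k' ≤ n := by
      have : k' * (n / k') ≥ k' * 1 := Nat.mul_le_mul_left _ hq1
      omega
    have hcong : ∀ i, i < k' → A (n - k' + i) = A (n % k' + i) := by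
      intro i hi
      have e1 := hq (n - k' + i) (by omega)
      have e2 := hq (n % k' + i) (by omega)
      rw [e1, e2]
      congr 1
      have h1 : n - k' + i = n % k' + i + k' * (n / k' - 1) := by omega
      rw [h1, Nat.add_mul_mod_self_left]
    have hltr : SeqLT (shiftSeq (n % k') A) A := by
      rcases hmax (n % k') with h | h
      · exact h
      · exact absurd h (hmin (n % k') hr1 (by omega))
    obtain ⟨t, hagr, hner, hparr⟩ := (seqLT_iff _ _).mp hltr
    simp only [shiftSeq] at hagr hner
    have hdk2 : ∀ i, A (n - k' + i + k') = A i := by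
      intro i
      have h1 : n - k' + i + k' = i + n := by omega
      rw [h1, hA]
    have htm : n - k' + t = m := by
      have h1 : t ≤ m - (n - k') := by
        by_contra hgt
        push_neg at hgt
        have h2 := hagr (m - (n - k')) hgt
        apply hne
        have h3 : m = n - k' + (m - (n - k')) := by omega
        rw [h3, hdk2, hcong _ (by omega)]
        rw [Nat.add_comm] at h2
        exact h2.symm
      have h2 : m - (n - k') ≤ t := by
        by_contra hgt
        push_neg at hgt
        have h3 : n - k' + t < m := by omega
        have h4 := hag (n - k' + t) h3
        rw [hdk2, hcong t (by omega)] at h4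
        apply hner
        rw [Nat.add_comm] at h4
        exact h4.symm
      omega
    -- the segment parity : cnt A (n - k') is odd
    have hseg : cnt A (n - k') % 2 = 1 := by
      have h1 : cnt (shiftSeq k' A) (m+1) = cnt A (n - k') + cnt A (t+1) := by
        have h2 : m + 1 = (n - k') + (t + 1) := by omega
        rw [h2, cnt_add]
        congr 1
        · apply cnt_congr
          intro i hi
          exact hag i (by omega)
        · apply cnt_congr
          intro u hu
          show A (n - k' + u + k') = A u
          exact hdk2 u
      have h3 : cnt A (t+1) % 2 = 1 := by
        have hcc2 : cnt (shiftSeq (n % k') A) t = cnt A t := cnt_congr (fun i hi => hagr i hi)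
        have h4 : cnt (shiftSeq (n % k') A) (t+1)
            = cnt A t + (if (!(A t)) = true then 1 else 0) := by
          rw [cnt_succ, hcc2]
          congr 1
          show (if A (t + n % k') = true then (1:ℕ) else 0) = _
          rw [bool_ne hner]
        rw [h4, Nat.even_iff] at hparr
        rw [cnt_succ]
        cases hx : A t <;> rw [hx] at hparr <;> simp at hparr ⊢ <;> omega
      rw [h1, Nat.even_iff] at hpar
      omega
    -- construct the witness n - 1 - k'
    left
    rw [seqLT_iff]
    have hd1 : n - 1 - k' + k' = n - 1 := by omega
    have hagd := hag (n - 1 - k') (by omega)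
    refine ⟨n - 1 - k', ?_, ?_, ?_⟩
    · intro i hi
      show flipAt n A (i + k') = flipAt n A i
      rw [flip_eq n A (by rw [Nat.mod_eq_of_lt (by omega)]; omega),
          flip_eq n A (by rw [Nat.mod_eq_of_lt (by omega)]; omega), hag i (by omega)]
    · show flipAt n A (n - 1 - k' + k') ≠ flipAt n A (n - 1 - k')
      rw [flip_ne n A (by rw [hd1, Nat.mod_eq_of_lt (by omega)]),
          flip_eq n A (by rw [Nat.mod_eq_of_lt (by omega)]; omega), hagd]
      exact Bool.not_ne_self _
    · have hvals : ∀ i < n - 1 - k', shiftSeq k' (flipAt n A) i = A i := by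
        intro i hi
        show flipAt n A (i + k') = A i
        rw [flip_eq n A (by rw [Nat.mod_eq_of_lt (by omega)]; omega), hag i (by omega)]
      rw [cnt_succ, cnt_congr hvals]
      have hlastv : shiftSeq k' (flipAt n A) (n - 1 - k') = !(A (n - 1 - k')) := by
        show flipAt n A (n - 1 - k' + k') = _
        rw [flip_ne n A (by rw [hd1, Nat.mod_eq_of_lt (by omega)]), hagd]
      rw [hlastv]
      have hnn : n - 1 - k' + 1 = n - k' := by omega
      have hseg' := hseg
      rw [← hnn, cnt_succ] at hseg'
      rw [Nat.even_iff]
      cases hx : A (n - 1 - k') <;> rw [hx] at hseg' <;> simp at hseg' ⊢ <;> omega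
end

section
/- Let A be a periodic admissible sequence of minimal period n. If the minimal period of μ(A) equals n, then μ(μ(A)) = A. -/
namespace S4

/-- parity of the number of `true`s among `A 0, …, A (j-1)`. -/
def pcnt (A : ℕ → Bool) : ℕ → Bool
  | 0 => false
  | j+1 => xor (pcnt A j) (A j)

def theta (A : ℕ → Bool) : ℕ → Bool := fun i => pcnt A (i+1)

/-- plain lexicographic strict order on `ℕ → Bool`. -/
def LexLT (x y : ℕ → Bool) : Prop :=
  ∃ i, (∀ j < i, x j = y j) ∧ x i = false ∧ y i = true

lemma lexLT_irrefl (x : ℕ → Bool) : ¬ LexLT x x := by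
  rintro ⟨i, -, h0, h1⟩; rw [h0] at h1; exact Bool.false_ne_true h1

lemma lexLT_trans {x y z : ℕ → Bool} (h1 : LexLT x y) (h2 : LexLT y z) : LexLT x z := by
  obtain ⟨i, hi, hi0, hi1⟩ := h1
  obtain ⟨j, hj, hj0, hj1⟩ := h2
  rcases lt_trichotomy i j with h | rfl | h
  · exact ⟨i, fun t ht => (hi t ht).trans (hj t (ht.trans h)), hi0, (hj i h) ▸ hi1⟩
  · exact ⟨i, fun t ht => (hi t ht).trans (hj t ht), hi0, hj1⟩
  · exact ⟨j, fun t ht => (hi t (ht.trans h)).trans (hj t ht), (hi j h).trans hj0, hj1⟩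

lemma lexLT_asymm {x y : ℕ → Bool} (h1 : LexLT x y) (h2 : LexLT y x) : False :=
  lexLT_irrefl x (lexLT_trans h1 h2)

lemma lexLT_total {x y : ℕ → Bool} (h : x ≠ y) : LexLT x y ∨ LexLT y x := by
  have hne : ∃ i, x i ≠ y i := Function.ne_iff.mp h
  classical
  set i := Nat.find hne with hi
  have hagree : ∀ j < i, x j = y j := fun j hj => by
    by_contra hc; exact Nat.find_min hne hj hc
  have hd : x i ≠ y i := Nat.find_spec hne
  cases hx : x i <;> cases hy : y i
  · rw [hx, hy] at hd; exact absurd rfl hd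
  · exact Or.inl ⟨i, hagree, hx, hy⟩
  · exact Or.inr ⟨i, fun j hj => (hagree j hj).symm, hy, hx⟩
  · rw [hx, hy] at hd; exact absurd rfl hd

lemma pcnt_succ (A : ℕ → Bool) (j : ℕ) : pcnt A (j+1) = xor (pcnt A j) (A j) := rfl

lemma symbol_eq (A : ℕ → Bool) (j : ℕ) : A j = xor (pcnt A j) (pcnt A (j+1)) := by
  rw [pcnt_succ]; cases pcnt A j <;> cases A j <;> rfl

lemma pcnt_congr {A B : ℕ → Bool} {j : ℕ} (h : ∀ i < j, A i = B i) :
    pcnt A j = pcnt B j := by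
  induction j with
  | zero => rfl
  | succ j ih =>
    rw [pcnt_succ, pcnt_succ, ih (fun i hi => h i (hi.trans (Nat.lt_succ_self j))),
      h j (Nat.lt_succ_self j)]

lemma pcnt_shift (A : ℕ → Bool) (k j : ℕ) :
    pcnt (shiftSeq k A) j = xor (pcnt A (j + k)) (pcnt A k) := by
  induction j with
  | zero => simp [pcnt]
  | succ j ih =>
    rw [pcnt_succ, ih]
    have : j + 1 + k = (j + k) + 1 := by omega
    rw [this, pcnt_succ]
    show xor (xor (pcnt A (j+k)) (pcnt A k)) (A (j + k)) = _
    cases pcnt A (j+k) <;> cases pcnt A k <;> cases A (j+k) <;> rfl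

lemma pcnt_periodic {A : ℕ → Bool} {n : ℕ} (h : ∀ i, A (i + n) = A i) (j : ℕ) :
    pcnt A (j + n) = xor (pcnt A j) (pcnt A n) := by
  induction j with
  | zero => simp [pcnt]
  | succ j ih =>
    have : j + 1 + n = (j + n) + 1 := by omega
    rw [this, pcnt_succ, ih, h j, pcnt_succ]
    cases pcnt A j <;> cases pcnt A n <;> cases A j <;> rfl

lemma blockEven_iff (A : ℕ → Bool) (j : ℕ) : BlockEven A j ↔ pcnt A j = false := by
  induction j with
  | zero => simp [BlockEven, pcnt]
  | succ j ih =>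
    unfold BlockEven at *
    rw [Finset.range_add_one, Finset.filter_insert]
    by_cases hA : A j = true
    · rw [if_pos hA, Finset.card_insert_of_notMem (by simp), pcnt_succ, hA]
      rw [Nat.even_add_one, ih]
      cases pcnt A j <;> simp
    · rw [if_neg hA, pcnt_succ, Bool.not_eq_true] at *
      rw [hA, ih]
      cases pcnt A j <;> simp

lemma seqLT_iff (A B : ℕ → Bool) : SeqLT A B ↔ LexLT (theta A) (theta B) := by
  constructor
  · rintro ⟨n, hagree, hne, hcase⟩
    have hpc : ∀ j ≤ n, pcnt A j = pcnt B j := fun j hj =>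
      pcnt_congr (fun i hi => hagree i (lt_of_lt_of_le hi hj))
    refine ⟨n, fun j hj => ?_, ?_⟩
    · show pcnt A (j+1) = pcnt B (j+1)
      exact hpc (j+1) hj
    · have hA : theta A n = xor (pcnt A n) (A n) := rfl
      have hB : theta B n = xor (pcnt B n) (B n) := rfl
      rw [hA, hB, ← hpc n le_rfl]
      rcases hcase with ⟨he, ha, hb⟩ | ⟨he, ha, hb⟩
      · rw [(blockEven_iff A n).mp he, ha, hb]; exact ⟨rfl, rfl⟩
      · have : pcnt A n = true := by
          cases hp : pcnt A n
          · exact absurd ((blockEven_iff A n).mpr hp) he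
          · rfl
        rw [this, ha, hb]; exact ⟨rfl, rfl⟩
  · rintro ⟨i, hagree, h0, h1⟩
    have hpc : ∀ j ≤ i, pcnt A j = pcnt B j := by
      intro j hj
      cases j with
      | zero => rfl
      | succ j => exact hagree j hj
    have hsym : ∀ j < i, A j = B j := fun j hj => by
      rw [symbol_eq A j, symbol_eq B j, hpc j (le_of_lt hj), hpc (j+1) hj]
    have hA : theta A i = xor (pcnt A i) (A i) := rfl
    have hB : theta B i = xor (pcnt B i) (B i) := rfl
    rw [hA] at h0; rw [hB] at h1
    refine ⟨i, hsym, ?_, ?_⟩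
    · intro hc
      rw [hpc i le_rfl, hc] at h0
      rw [h0] at h1
      exact Bool.false_ne_true h1
    · cases hp : pcnt A i
      · left
        refine ⟨(blockEven_iff A i).mpr hp, ?_, ?_⟩
        · rw [hp] at h0; simpa using h0
        · rw [← hpc i le_rfl, hp] at h1; simpa using h1
      · right
        refine ⟨fun hc => by rw [(blockEven_iff A i).mp hc] at hp; simp at hp, ?_, ?_⟩
        · rw [hp] at h0; simpa using h0
        · rw [← hpc i le_rfl, hp] at h1; simpa using h1

lemma theta_ext {A B : ℕ → Bool} (h : ∀ j, theta A j = theta B j) : A = B := by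
  funext j
  have hpc : ∀ j, pcnt A j = pcnt B j := by
    intro j
    cases j with
    | zero => rfl
    | succ j => exact h j
  rw [symbol_eq A j, symbol_eq B j, hpc j, hpc (j+1)]

lemma seqLE_iff (A B : ℕ → Bool) : SeqLE A B ↔ (LexLT (theta A) (theta B) ∨ A = B) := by
  unfold SeqLE
  rw [seqLT_iff]

end S4

namespace S4

variable {A : ℕ → Bool} {n : ℕ}

lemma per_iterate (h : ∀ i, A (i + n) = A i) : ∀ q i, A (i + q * n) = A i := by
  intro q
  induction q with
  | zero => intro i; simp
  | succ q ih =>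
    intro i
    have : i + (q+1) * n = (i + q * n) + n := by ring
    rw [this, h, ih]

lemma per_mod (h : ∀ i, A (i + n) = A i) (i : ℕ) : A i = A (i % n) := by
  rcases Nat.eq_zero_or_pos n with rfl | hn
  · simp
  · conv_lhs => rw [← Nat.mod_add_div' i n]
    exact per_iterate h (i / n) (i % n)

lemma shift_shift (k m : ℕ) : shiftSeq k (shiftSeq m A) = shiftSeq (k + m) A := by
  funext i; show A (i + k + m) = A (i + (k + m)); ring_nf

lemma shift_mod (h : ∀ i, A (i + n) = A i) (k : ℕ) :
    shiftSeq k A = shiftSeq (k % n) A := by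
  funext i
  show A (i + k) = A (i + k % n)
  rw [per_mod h (i + k), per_mod h (i + k % n), Nat.add_mod i k, Nat.add_mod i (k % n),
    Nat.mod_mod_of_dvd _ dvd_rfl]

lemma exists_max (f : ℕ → (ℕ → Bool)) :
    ∀ n, 0 < n → ∃ m < n, ∀ j < n, LexLT (theta (f j)) (theta (f m)) ∨ f j = f m := by
  intro n
  induction n with
  | zero => omega
  | succ n ih =>
    intro _
    rcases Nat.eq_zero_or_pos n with rfl | hn
    · exact ⟨0, Nat.lt_succ_self 0, fun j hj => by interval_cases j; exact Or.inr rfl⟩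
    · obtain ⟨m, hm, hmax⟩ := ih hn
      by_cases hc : LexLT (theta (f n)) (theta (f m)) ∨ f n = f m
      · refine ⟨m, hm.trans (Nat.lt_succ_self n), fun j hj => ?_⟩
        rcases Nat.lt_succ_iff_lt_or_eq.mp hj with hj | rfl
        · exact hmax j hj
        · exact hc
      · have hne : f n ≠ f m := fun he => hc (Or.inr he)
        have hte : theta (f n) ≠ theta (f m) := fun he => hne (theta_ext (congrFun he))
        have hlt : LexLT (theta (f m)) (theta (f n)) := by
          rcases lexLT_total hte with h | h
          · exact absurd (Or.inl h) hc
          · exact h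
        refine ⟨n, Nat.lt_succ_self n, fun j hj => ?_⟩
        rcases Nat.lt_succ_iff_lt_or_eq.mp hj with hj | rfl
        · rcases hmax j hj with h | h
          · exact Or.inl (lexLT_trans h hlt)
          · exact Or.inl (h ▸ hlt)
        · exact Or.inr rfl

end S4

namespace S4

variable {A : ℕ → Bool} {n : ℕ}

lemma minPer_unpack (hn : 0 < n) (hper : minPer A = n) :
    (∀ i, A (i + n) = A i) ∧ (∀ k, 0 < k → k < n → shiftSeq k A ≠ A) := by
  have hne : {j | IsPeriodicSeq A j}.Nonempty := by
    by_contra hc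
    rw [Set.not_nonempty_iff_eq_empty] at hc
    rw [minPer, hc, Nat.sInf_empty] at hper
    omega
  have hmem : IsPeriodicSeq A (minPer A) := Nat.sInf_mem hne
  rw [hper] at hmem
  refine ⟨hmem.2, fun k hk0 hkn he => ?_⟩
  have : IsPeriodicSeq A k := ⟨hk0, fun i => congrFun he i⟩
  have := Nat.sInf_le (s := {j | IsPeriodicSeq A j}) this
  rw [minPer] at hper
  omega

lemma shifts_ne (hp : ∀ i, A (i + n) = A i)
    (hmin : ∀ k, 0 < k → k < n → shiftSeq k A ≠ A)
    {m1 m2 : ℕ} (h12 : m1 < m2) (h2n : m2 < n) :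
    shiftSeq m1 A ≠ shiftSeq m2 A := by
  intro he
  have he' : ∀ i, A (i + m1) = A (i + m2) := fun i => congrFun he i
  set d := m2 - m1 with hd
  have hkey : ∀ j, A (j + (n - d)) = A j := by
    intro j
    have h1 := he' (j + (n - m2))
    have e1 : j + (n - m2) + m1 = j + (n - d) := by omega
    have e2 : j + (n - m2) + m2 = j + n := by omega
    rw [e1, e2] at h1
    rw [h1, hp]
  exact hmin (n - d) (by omega) (by omega) (funext fun i => hkey i)

lemma maximal_shift_exists (hn : 0 < n) (hp : ∀ i, A (i + n) = A i) :
    ∃ m < n, SeqMaximal (shiftSeq m A) := by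
  obtain ⟨m, hm, hmax⟩ := exists_max (fun j => shiftSeq j A) n hn
  refine ⟨m, hm, fun k => ?_⟩
  have h1 : shiftSeq k (shiftSeq m A) = shiftSeq ((k + m) % n) A := by
    rw [shift_shift, shift_mod hp]
  rw [h1, seqLE_iff]
  exact hmax ((k + m) % n) (Nat.mod_lt _ hn)

lemma seqLE_antisymm {X Y : ℕ → Bool} (h1 : SeqLE X Y) (h2 : SeqLE Y X) : X = Y := by
  rw [seqLE_iff] at h1 h2
  rcases h1 with h1 | h1
  · rcases h2 with h2 | h2
    · exact absurd h2 (fun h => lexLT_asymm h1 h)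
    · exact h2.symm
  · exact h1

lemma maximal_shift_unique (hp : ∀ i, A (i + n) = A i)
    (hmin : ∀ k, 0 < k → k < n → shiftSeq k A ≠ A)
    {m1 m2 : ℕ} (h1n : m1 < n) (h2n : m2 < n)
    (hM1 : SeqMaximal (shiftSeq m1 A)) (hM2 : SeqMaximal (shiftSeq m2 A)) :
    m1 = m2 := by
  by_contra hne
  -- wlog m1 < m2
  wlog h12 : m1 < m2 generalizing m1 m2
  · exact this h2n h1n hM2 hM1 (Ne.symm hne) (by omega)
  have e1 : shiftSeq (m2 - m1) (shiftSeq m1 A) = shiftSeq m2 A := by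
    rw [shift_shift]
    have e : m2 - m1 + m1 = m2 := by omega
    rw [e]
  have e2 : shiftSeq (n - (m2 - m1)) (shiftSeq m2 A) = shiftSeq m1 A := by
    rw [shift_shift]
    have : n - (m2 - m1) + m2 = m1 + n := by omega
    rw [this, ← shift_shift]
    funext i
    show A (i + m1 + n) = A (i + m1)
    exact hp _
  have hle1 : SeqLE (shiftSeq m2 A) (shiftSeq m1 A) := e1 ▸ hM1 (m2 - m1)
  have hle2 : SeqLE (shiftSeq m1 A) (shiftSeq m2 A) := e2 ▸ hM2 (n - (m2 - m1))
  exact shifts_ne hp hmin h12 h2n (seqLE_antisymm hle2 hle1)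

lemma sInf_maximal_eq (hn : 0 < n) (hp : ∀ i, A (i + n) = A i)
    (hmin : ∀ k, 0 < k → k < n → shiftSeq k A ≠ A)
    {m : ℕ} (hm : m < n) (hM : SeqMaximal (shiftSeq m A)) :
    sInf {m' : ℕ | SeqMaximal (shiftSeq m' A)} = m := by
  apply le_antisymm
  · exact Nat.sInf_le hM
  · apply le_csInf ⟨m, hM⟩
    intro b hb
    have hb' : SeqMaximal (shiftSeq (b % n) A) := by
      rwa [← shift_mod hp]
    have := maximal_shift_unique hp hmin (Nat.mod_lt _ hn) hm hb' hM
    have := Nat.mod_le b n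
    omega

end S4

namespace S4

section Key

variable {M : ℕ → Bool} {n : ℕ}

lemma flip_per (hp : ∀ i, M (i + n) = M i) : ∀ i, flipAt n M (i + n) = flipAt n M i := by
  intro i
  simp only [flipAt, Nat.add_mod_right, hp i]

lemma flip_eq {j : ℕ} (hj : j < n - 1) : flipAt n M j = M j := by
  have h1 : j % n = j := Nat.mod_eq_of_lt (by omega)
  simp only [flipAt, h1]
  rw [if_neg (by omega)]

lemma flip_last (hn : 0 < n) : flipAt n M (n - 1) = !(M (n - 1)) := by
  have h1 : (n - 1) % n = n - 1 := Nat.mod_eq_of_lt (by omega)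
  simp only [flipAt, h1]
  simp

lemma flip_flip : flipAt n (flipAt n M) = M := by
  funext i
  unfold flipAt
  by_cases h : i % n = n - 1 <;> simp [h]

lemma pcnt_flip_lt {j : ℕ} (hj : j ≤ n - 1) : pcnt (flipAt n M) j = pcnt M j :=
  pcnt_congr fun i hi => flip_eq (lt_of_lt_of_le hi hj)

lemma pcnt_flip_n (hn : 0 < n) : pcnt (flipAt n M) n = !(pcnt M n) := by
  obtain ⟨m, rfl⟩ : ∃ m, n = m + 1 := ⟨n - 1, by omega⟩
  have hl : flipAt (m+1) M m = !(M m) := by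
    have := flip_last (M := M) (n := m+1) (by omega)
    simpa using this
  rw [pcnt_succ, pcnt_succ, hl, pcnt_flip_lt (by omega)]
  cases pcnt M m <;> cases M m <;> rfl

lemma theta_shift (A : ℕ → Bool) (k : ℕ) :
    theta (shiftSeq k A) = fun i => xor (pcnt A (i+1+k)) (pcnt A k) := by
  funext i
  exact pcnt_shift A k (i+1)

/-- "subcase (a)": `S^k M` agrees with `M` up to position `n-k-1`, where the parity flips,
    and the prefix of length `n-k` has odd parity. -/
def SubA (M : ℕ → Bool) (n k : ℕ) : Prop :=
  (∀ i < n - k - 1, xor (pcnt M (i+1+k)) (pcnt M k) = pcnt M (i+1)) ∧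
  xor (pcnt M n) (pcnt M k) = false ∧ pcnt M (n - k) = true

lemma bcancel {a b c : Bool} (h : xor a b = c) : a = xor c b := by
  cases a <;> cases b <;> cases c <;> simp_all

lemma half (hn : 0 < n) (hp : ∀ i, M (i + n) = M i)
    (hM' : ∀ k', 0 < k' → k' < n → LexLT (theta (shiftSeq k' M)) (theta M))
    {k : ℕ} (hk0 : 0 < k) (hkn : k < n) (hna : ¬ SubA M n k) :
    LexLT (theta (shiftSeq k (flipAt n M))) (theta (flipAt n M)) := by
  set B := flipAt n M with hB
  have hvlt : ∀ j ≤ n - 1, pcnt B j = pcnt M j := fun j hj => pcnt_flip_lt hj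
  have hvk : pcnt B k = pcnt M k := hvlt k (by omega)
  have hvn : pcnt B n = !(pcnt M n) := pcnt_flip_n hn
  have hMk := hM' k hk0 hkn
  rw [theta_shift] at hMk
  obtain ⟨j, hag, hj0, hj1⟩ := hMk
  simp only at hag hj0 hj1
  -- hj1 : theta M j = true, i.e. pcnt M (j+1) = true
  rw [theta_shift]
  rcases lt_or_ge j (n - k - 1) with hcase | hcase
  · -- Case 1 : disagreement before position n-k-1
    refine ⟨j, fun t ht => ?_, ?_, ?_⟩
    · show xor (pcnt B (t+1+k)) (pcnt B k) = pcnt B (t+1)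
      rw [hvk, hvlt (t+1+k) (by omega), hvlt (t+1) (by omega)]
      exact hag t ht
    · show xor (pcnt B (j+1+k)) (pcnt B k) = false
      rw [hvk, hvlt (j+1+k) (by omega)]
      exact hj0
    · show pcnt B (j+1) = true
      rw [hvlt (j+1) (by omega)]
      exact hj1
  · -- Case 2 : S^k M and M agree up to n-k-1
    have hblo : ∀ i < n - k - 1, xor (pcnt M (i+1+k)) (pcnt M k) = pcnt M (i+1) :=
      fun i hi => hag i (lt_of_lt_of_le hi hcase)
    rcases eq_or_lt_of_le hcase with hji | hji
    · -- j = n-k-1 : this is exactly SubA, contradiction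
      exfalso
      apply hna
      refine ⟨hblo, ?_, ?_⟩
      · have e : j + 1 + k = n := by omega
        rw [e] at hj0
        exact hj0
      · have hj1' : pcnt M (j+1) = true := hj1
        have e : j + 1 = n - k := by omega
        rw [e] at hj1'
        exact hj1'
    · -- j > n-k-1 : "subcase (b)"
      have heq0 : xor (pcnt M n) (pcnt M k) = pcnt M (n - k) := by
        have := hag (n - k - 1) hji
        have e1 : n - k - 1 + 1 + k = n := by omega
        have e2 : n - k - 1 + 1 = n - k := by omega
        rw [e1] at this
        show _ = _
        rw [← e2]
        exact this
      cases hul : pcnt M (n - k) with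
      | true =>
        -- immediate win at position n-k-1
        refine ⟨n - k - 1, fun t ht => ?_, ?_, ?_⟩
        · show xor (pcnt B (t+1+k)) (pcnt B k) = pcnt B (t+1)
          rw [hvk, hvlt (t+1+k) (by omega), hvlt (t+1) (by omega)]
          exact hblo t ht
        · show xor (pcnt B (n - k - 1 + 1 + k)) (pcnt B k) = false
          have e1 : n - k - 1 + 1 + k = n := by omega
          rw [e1, hvn, hvk]
          rw [hul] at heq0
          cases hx : pcnt M n <;> rw [hx] at heq0 <;> simp_all
        · show pcnt B (n - k - 1 + 1) = true
          have e2 : n - k - 1 + 1 = n - k := by omega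
          rw [e2, hvlt (n - k) (by omega), hul]
      | false =>
        -- impossible: contradicts maximality of M
        exfalso
        have hukn : pcnt M k = pcnt M n := by
          rw [hul] at heq0
          cases hx : pcnt M n <;> rw [hx] at heq0 <;> simp_all
        have F2 : ∀ s, xor (pcnt M (n - k + s + 1 + k)) (pcnt M k) = pcnt M (s+1) := by
          intro s
          have e : n - k + s + 1 + k = (s + 1) + n := by omega
          rw [e, pcnt_periodic hp (s+1), hukn]
          cases pcnt M (s+1) <;> cases pcnt M n <;> rfl
        have hMl := hM' (n - k) (by omega) (by omega)
        rw [theta_shift] at hMl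
        obtain ⟨t, hag', h0', h1'⟩ := hMl
        simp only at hag' h0' h1'
        have h1'' : pcnt M (t+1) = true := h1'
        have hL : ∀ s c, xor (pcnt M (s + 1 + (n - k))) (pcnt M (n - k)) = c →
            pcnt M (n - k + s + 1) = c := by
          intro s c h
          have e : s + 1 + (n - k) = n - k + s + 1 := by omega
          rw [e, hul] at h
          rw [← h]
          cases pcnt M (n - k + s + 1) <;> rfl
        rcases lt_trichotomy j (n - k + t) with hjt | hjt | hjt
        · obtain ⟨s, hst, rfl⟩ : ∃ s, s < t ∧ j = n - k + s := ⟨j - (n - k), by omega, by omega⟩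
          have hA : pcnt M (s+1) = false := by rw [← F2 s]; exact hj0
          have hB2 : pcnt M (n - k + s + 1) = true := hj1
          have hC : pcnt M (n - k + s + 1) = pcnt M (s+1) := hL s _ (hag' s hst)
          rw [hA] at hC
          rw [hC] at hB2
          exact Bool.false_ne_true hB2
        · have hA : pcnt M (t+1) = false := by
            rw [← F2 t]
            rw [hjt] at hj0
            exact hj0
          rw [hA] at h1''
          exact Bool.false_ne_true h1''
        · have h3 := hag (n - k + t) hjt
          have hA : pcnt M (t+1) = pcnt M (n - k + t + 1) := by rw [← F2 t]; exact h3
          have h5 : pcnt M (n - k + t + 1) = false := hL t _ h0'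
          rw [h5, h1''] at hA
          simp at hA

end Key

end S4

namespace S4

section Key2

variable {M : ℕ → Bool} {n : ℕ}

lemma border_of_subA (hn : 0 < n) {k : ℕ} (hk0 : 0 < k) (hkn : k < n)
    (hs : SubA M n k) : ∀ i < n - k, flipAt n M (i + k) = flipAt n M i := by
  obtain ⟨s1, s2, s3⟩ := hs
  have hw : ∀ t ≤ n - k - 1, pcnt (shiftSeq k M) t = pcnt M t := by
    intro t ht
    cases t with
    | zero => rfl
    | succ t' =>
      rw [pcnt_shift]
      exact s1 t' (by omega)
  have hsym : ∀ i < n - k - 1, M (i + k) = M i := by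
    intro i hi
    have h1 : shiftSeq k M i = M i := by
      rw [symbol_eq (shiftSeq k M) i, hw i (by omega), hw (i+1) (by omega), ← symbol_eq]
    exact h1
  have hws : pcnt (shiftSeq k M) (n - k) = false := by
    rw [pcnt_shift]
    have e : n - k + k = n := by omega
    rw [e]
    exact s2
  have e1 : n - k - 1 + 1 = n - k := by omega
  have hA : shiftSeq k M (n - k - 1) = xor (pcnt M (n - k - 1)) false := by
    rw [symbol_eq (shiftSeq k M) (n - k - 1), e1, hws, hw (n - k - 1) le_rfl]
  have hBs : M (n - k - 1) = xor (pcnt M (n - k - 1)) true := by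
    rw [symbol_eq M (n - k - 1), e1, s3]
  have hlast : M (n - 1) = !(M (n - k - 1)) := by
    have e2 : n - k - 1 + k = n - 1 := by omega
    have h2 : M (n - 1) = xor (pcnt M (n - k - 1)) false := by rw [← e2]; exact hA
    rw [h2, hBs]
    cases pcnt M (n - k - 1) <;> rfl
  intro i hi
  rcases Nat.lt_or_ge i (n - k - 1) with h | h
  · rw [flip_eq (show i + k < n - 1 by omega), flip_eq (show i < n - 1 by omega)]
    exact hsym i h
  · have hieq : i = n - k - 1 := by omega
    subst hieq
    have e : n - k - 1 + k = n - 1 := by omega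
    rw [e, flip_last hn, hlast, flip_eq (show n - k - 1 < n - 1 by omega)]
    simp

lemma subA_not_both (hn : 0 < n) (hp : ∀ i, M (i + n) = M i)
    (hBmin : ∀ k, 0 < k → k < n → shiftSeq k (flipAt n M) ≠ flipAt n M)
    {k : ℕ} (hk0 : 0 < k) (hkn : k < n)
    (h1 : SubA M n k) (h2 : SubA M n (n - k)) : False := by
  set B := flipAt n M with hB
  have hBp : ∀ i, B (i + n) = B i := flip_per hp
  have b1 : ∀ i < n - k, B (i + k) = B i := border_of_subA hn hk0 hkn h1
  have b2 : ∀ i < k, B (i + (n - k)) = B i := by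
    have h3 := border_of_subA hn (show 0 < n - k by omega) (show n - k < n by omega) h2
    intro i hi
    exact h3 i (by omega)
  have hall : ∀ i < n, B (i + k) = B i := by
    intro i hi
    rcases Nat.lt_or_ge i (n - k) with h | h
    · exact b1 i h
    · have e1 : i + k = (i - (n - k)) + n := by omega
      rw [e1, hBp, ← b2 (i - (n - k)) (by omega)]
      congr 1
      omega
  have hallall : ∀ i, B (i + k) = B i := by
    intro i
    calc B (i + k) = B ((i + k) % n) := per_mod hBp _
      _ = B ((i % n + k) % n) := by
          rw [Nat.add_mod i k n, Nat.add_mod (i % n) k n, Nat.mod_mod_of_dvd i dvd_rfl]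
      _ = B (i % n + k) := (per_mod hBp _).symm
      _ = B (i % n) := hall _ (Nat.mod_lt _ hn)
      _ = B i := (per_mod hBp i).symm
  exact hBmin k hk0 hkn (funext hallall)

lemma combine (hn : 0 < n) (hp : ∀ i, M (i + n) = M i)
    {k : ℕ} (hk0 : 0 < k) (hkn : k < n) (hs : SubA M n k)
    (hl : LexLT (theta (shiftSeq (n - k) (flipAt n M))) (theta (flipAt n M))) :
    LexLT (theta (shiftSeq k (flipAt n M))) (theta (flipAt n M)) := by
  set B := flipAt n M with hB
  obtain ⟨s1, s2, s3⟩ := hs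
  have hBp : ∀ i, B (i + n) = B i := flip_per hp
  have hvlt : ∀ j ≤ n - 1, pcnt B j = pcnt M j := fun j hj => pcnt_flip_lt hj
  have hvn : pcnt B n = !(pcnt M n) := pcnt_flip_n hn
  have hvk : pcnt B k = pcnt M k := hvlt k (by omega)
  have hvl : pcnt B (n - k) = true := by rw [hvlt (n - k) (by omega)]; exact s3
  have hmk : pcnt M k = pcnt M n := by
    cases hx : pcnt M n <;> rw [hx] at s2 <;> simpa using s2
  rw [theta_shift] at hl ⊢
  obtain ⟨t, hag', h0', h1'⟩ := hl
  simp only at hag' h0' h1'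
  have h1'' : pcnt B (t+1) = true := h1'
  have hkey : ∀ s, xor (pcnt B (n - k + s + 1 + k)) (pcnt B k) = !(pcnt B (s+1)) := by
    intro s
    have e : n - k + s + 1 + k = (s+1) + n := by omega
    rw [e, pcnt_periodic hBp (s+1), hvn, hvk, hmk]
    cases pcnt B (s+1) <;> cases pcnt M n <;> rfl
  have hR : ∀ s c, xor (pcnt B (s + 1 + (n - k))) (pcnt B (n - k)) = c →
      pcnt B (n - k + s + 1) = !c := by
    intro s c h
    have e : s + 1 + (n - k) = n - k + s + 1 := by omega
    rw [e, hvl] at h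
    cases hx : pcnt B (n - k + s + 1) <;> rw [hx] at h <;> rw [← h] <;> rfl
  refine ⟨n - k + t, fun s hst => ?_, ?_, ?_⟩
  · show xor (pcnt B (s+1+k)) (pcnt B k) = pcnt B (s+1)
    rcases lt_trichotomy s (n - k - 1) with h | h | h
    · rw [hvk, hvlt (s+1+k) (by omega), hvlt (s+1) (by omega)]
      exact s1 s (by omega)
    · rw [show s + 1 + k = n by omega, show s + 1 = n - k by omega, hvn, hvk, hvl, hmk]
      cases pcnt M n <;> rfl
    · obtain ⟨s', hs', rfl⟩ : ∃ s', s' < t ∧ s = n - k + s' := ⟨s - (n - k), by omega, by omega⟩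
      rw [hkey s']
      have hthis := hR s' _ (hag' s' hs')
      rw [hthis]
      rfl
  · show xor (pcnt B (n - k + t + 1 + k)) (pcnt B k) = false
    rw [hkey t, h1'']
    rfl
  · show pcnt B (n - k + t + 1) = true
    rw [hR t _ h0']
    rfl

lemma key (hn : 0 < n) (hp : ∀ i, M (i + n) = M i) (hMmax : SeqMaximal M)
    (hMmin : ∀ k, 0 < k → k < n → shiftSeq k M ≠ M)
    (hBmin : ∀ k, 0 < k → k < n → shiftSeq k (flipAt n M) ≠ flipAt n M) :
    SeqMaximal (flipAt n M) := by
  have hM' : ∀ k', 0 < k' → k' < n → LexLT (theta (shiftSeq k' M)) (theta M) := by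
    intro k' h0 h1
    have h2 := hMmax k'
    rw [seqLE_iff] at h2
    rcases h2 with h | h
    · exact h
    · exact absurd h (hMmin k' h0 h1)
  have main : ∀ k, 0 < k → k < n →
      LexLT (theta (shiftSeq k (flipAt n M))) (theta (flipAt n M)) := by
    intro k h0 h1
    by_cases hs : SubA M n k
    · have hs2 : ¬ SubA M n (n - k) := fun h2 => subA_not_both hn hp hBmin h0 h1 hs h2
      exact combine hn hp h0 h1 hs (half hn hp hM' (by omega) (by omega) hs2)
    · exact half hn hp hM' h0 h1 hs
  intro k
  have hBp : ∀ i, flipAt n M (i + n) = flipAt n M i := flip_per hp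
  rcases Nat.eq_zero_or_pos (k % n) with h | h
  · right
    rw [shift_mod hBp k, h]
    funext i
    show flipAt n M (i + 0) = flipAt n M i
    rw [Nat.add_zero]
  · left
    rw [seqLT_iff, shift_mod hBp k]
    exact main (k % n) h (Nat.mod_lt _ hn)

end Key2

end S4

/-- If `A` is a periodic admissible sequence of minimal period `n`
and the minimal period of `μ A` equals `n`, then `μ (μ A) = A`. -/
theorem stmt4 (A : ℕ → Bool) (n : ℕ) (hn : 0 < n) (hper : minPer A = n)
    (hmu : minPer (muSeq A) = n) :
    muSeq (muSeq A) = A := by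
  have unf : ∀ X : ℕ → Bool, muSeq X =
      shiftSeq (minPer X - sInf {m' : ℕ | SeqMaximal (shiftSeq m' X)})
        (flipAt (minPer X) (shiftSeq (sInf {m' : ℕ | SeqMaximal (shiftSeq m' X)}) X)) :=
    fun X => rfl
  obtain ⟨hp, hminA⟩ := S4.minPer_unpack hn hper
  obtain ⟨m, hmn, hMmax⟩ := S4.maximal_shift_exists hn hp
  have hsinfA : sInf {m' : ℕ | SeqMaximal (shiftSeq m' A)} = m :=
    S4.sInf_maximal_eq hn hp hminA hmn hMmax
  have hMp : ∀ i, shiftSeq m A (i + n) = shiftSeq m A i := by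
    intro i
    show A (i + n + m) = A (i + m)
    have e : i + n + m = (i + m) + n := by omega
    rw [e, hp]
  have hMmin : ∀ k, 0 < k → k < n → shiftSeq k (shiftSeq m A) ≠ shiftSeq m A := by
    intro k h0 h1 he
    apply hminA k h0 h1
    funext j
    show A (j + k) = A j
    have h2 : ∀ i, A (i + k + m) = A (i + m) := fun i => congrFun he i
    have h3 := h2 (j + (n - m))
    have e1 : j + (n - m) + k + m = (j + k) + n := by omega
    have e2 : j + (n - m) + m = j + n := by omega
    rw [e1, e2, hp, hp] at h3
    exact h3
  have muA : muSeq A = shiftSeq (n - m) (flipAt n (shiftSeq m A)) := by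
    rw [unf A, hper, hsinfA]
  have hBp : ∀ i, flipAt n (shiftSeq m A) (i + n) = flipAt n (shiftSeq m A) i :=
    S4.flip_per hMp
  have hBmin : ∀ k, 0 < k → k < n →
      shiftSeq k (flipAt n (shiftSeq m A)) ≠ flipAt n (shiftSeq m A) := by
    intro k h0 h1 he
    have hper2 : IsPeriodicSeq (muSeq A) k := by
      refine ⟨h0, fun i => ?_⟩
      rw [muA]
      show flipAt n (shiftSeq m A) (i + k + (n - m)) = flipAt n (shiftSeq m A) (i + (n - m))
      have h2 : ∀ j, flipAt n (shiftSeq m A) (j + k) = flipAt n (shiftSeq m A) j :=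
        fun j => congrFun he j
      have e : i + k + (n - m) = (i + (n - m)) + k := by omega
      rw [e, h2]
    have h4 : minPer (muSeq A) ≤ k := Nat.sInf_le hper2
    omega
  have hBmax : SeqMaximal (flipAt n (shiftSeq m A)) := S4.key hn hMp hMmax hMmin hBmin
  obtain ⟨hp2, hmin2⟩ := S4.minPer_unpack hn hmu
  have hSm : shiftSeq m (muSeq A) = flipAt n (shiftSeq m A) := by
    rw [muA, S4.shift_shift, show m + (n - m) = n from by omega]
    funext i
    exact hBp i
  have hmax2 : SeqMaximal (shiftSeq m (muSeq A)) := by rw [hSm]; exact hBmax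
  have hsinf2 : sInf {m' : ℕ | SeqMaximal (shiftSeq m' (muSeq A))} = m :=
    S4.sInf_maximal_eq hn hp2 hmin2 hmn hmax2
  rw [unf (muSeq A), hmu, hsinf2, hSm, S4.flip_flip]
  funext i
  show A (i + (n - m) + m) = A i
  have e : i + (n - m) + m = i + n := by omega
  rw [e, hp]
end

section
/- Let A and B be periodic admissible sequences of minimal period n. If μ(A) = μ(B), then either A = B, or n is even and S^{n/2}(A) = B. -/
namespace Work
def pb (X : ℕ → Bool) : ℕ → Bool
  | 0 => false
  | t+1 => xor (pb X t) (X t)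
lemma pb_succ (X : ℕ → Bool) (t : ℕ) : pb X (t+1) = xor (pb X t) (X t) := rfl
lemma pb_congr {X Y : ℕ → Bool} : ∀ {t : ℕ}, (∀ i < t, X i = Y i) → pb X t = pb Y t := by
  intro t
  induction t with
  | zero => intro _; rfl
  | succ t ih =>
    intro h
    rw [pb_succ, pb_succ, ih (fun i hi => h i (by omega)), h t (by omega)]
lemma pb_add (X : ℕ → Bool) (a b : ℕ) :
    pb X (a + b) = xor (pb X a) (pb (shiftSeq a X) b) := by
  induction b with
  | zero => simp [pb]
  | succ b ih =>
    have h2 : a + (b+1) = (a+b)+1 := by omega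
    rw [h2, pb_succ, ih, pb_succ]
    show xor (xor (pb X a) (pb (shiftSeq a X) b)) (X (a + b)) = _
    have h3 : X (a + b) = shiftSeq a X b := by simp [shiftSeq, Nat.add_comm]
    rw [h3, Bool.xor_assoc]
lemma blockEven_iff (X : ℕ → Bool) : ∀ t, (BlockEven X t ↔ pb X t = false) := by
  intro t
  induction t with
  | zero => simp [BlockEven, pb]
  | succ t ih =>
    unfold BlockEven at *
    rw [Finset.range_add_one, Finset.filter_insert]
    by_cases hX : X t = true
    · rw [if_pos hX]
      rw [Finset.card_insert_of_notMem (by simp)]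
      rw [Nat.even_add_one, pb_succ, hX, ih]
      cases pb X t <;> simp
    · rw [if_neg hX]
      rw [pb_succ]
      simp only [Bool.not_eq_true] at hX
      rw [hX]
      simpa using ih

lemma seqLT_iff (X Y : ℕ → Bool) :
    SeqLT X Y ↔ ∃ q, (∀ i < q, X i = Y i) ∧ X q ≠ Y q ∧ X q = pb X q := by
  constructor
  · rintro ⟨q, hag, hne, hc⟩
    refine ⟨q, hag, hne, ?_⟩
    rcases hc with ⟨hev, hx, _⟩ | ⟨hod, hx, _⟩
    · rw [(blockEven_iff X q).mp hev, hx]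
    · have := (blockEven_iff X q).not.mp hod
      rw [hx]
      cases h : pb X q
      · exact absurd h this
      · rfl
  · rintro ⟨q, hag, hne, hc⟩
    refine ⟨q, hag, hne, ?_⟩
    cases hp : pb X q
    · left
      refine ⟨(blockEven_iff X q).mpr hp, by rw [hc, hp], ?_⟩
      rw [hc, hp] at hne
      cases h : Y q
      · exact absurd h.symm hne
      · rfl
    · right
      refine ⟨(blockEven_iff X q).not.mpr (by simp [hp]), by rw [hc, hp], ?_⟩
      rw [hc, hp] at hne
      cases h : Y q
      · rfl
      · exact absurd h.symm hne

lemma seqLT_of {X Y : ℕ → Bool} (q : ℕ) (hag : ∀ i < q, X i = Y i)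
    (hne : X q ≠ Y q) (hc : X q = pb X q) : SeqLT X Y :=
  (seqLT_iff X Y).mpr ⟨q, hag, hne, hc⟩

lemma seqLE_cond {X Y : ℕ → Bool} (h : SeqLE X Y) (q : ℕ)
    (hag : ∀ i < q, X i = Y i) (hne : X q ≠ Y q) : X q = pb X q := by
  rcases h with h | rfl
  · obtain ⟨q', hag', hne', hc'⟩ := (seqLT_iff X Y).mp h
    have : q' = q := by
      rcases Nat.lt_trichotomy q' q with h1 | h1 | h1
      · exact absurd (hag q' h1) hne'
      · exact h1
      · exact absurd (hag' q h1) hne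
    rwa [this] at hc'
  · exact absurd rfl hne

lemma seqLE_refl (X : ℕ → Bool) : SeqLE X X := Or.inr rfl

lemma seqLE_total (X Y : ℕ → Bool) : SeqLE X Y ∨ SeqLE Y X := by
  by_cases hxy : X = Y
  · exact Or.inl (Or.inr hxy)
  · have hex : ∃ i, X i ≠ Y i := by
      by_contra h
      push_neg at h
      exact hxy (funext h)
    set q := Nat.find hex with hq
    have hne : X q ≠ Y q := Nat.find_spec hex
    have hag : ∀ i < q, X i = Y i := by
      intro i hi
      have := Nat.find_min hex hi
      tauto
    have hpb : pb X q = pb Y q := pb_congr hag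
    by_cases hc : X q = pb X q
    · exact Or.inl (Or.inl (seqLT_of q hag hne hc))
    · refine Or.inr (Or.inl (seqLT_of q (fun i hi => (hag i hi).symm) (Ne.symm hne) ?_))
      rw [← hpb]
      cases h1 : X q <;> cases h2 : pb X q <;> cases h3 : Y q <;> simp_all

lemma seqLE_trans {X Y Z : ℕ → Bool} (h1 : SeqLE X Y) (h2 : SeqLE Y Z) : SeqLE X Z := by
  rcases h1 with h1 | rfl
  · rcases h2 with h2 | rfl
    · obtain ⟨q1, a1, n1, c1⟩ := (seqLT_iff X Y).mp h1
      obtain ⟨q2, a2, n2, c2⟩ := (seqLT_iff Y Z).mp h2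
      rcases Nat.lt_trichotomy q1 q2 with h | h | h
      · refine Or.inl (seqLT_of q1 (fun i hi => (a1 i hi).trans (a2 i (by omega))) ?_ c1)
        rw [← a2 q1 h]; exact n1
      · subst h
        have : pb X q1 = pb Y q1 := pb_congr a1
        rw [this, ← c2] at c1
        exact absurd c1 n1
      · refine Or.inl (seqLT_of q2 (fun i hi => (a1 i (by omega)).trans (a2 i hi)) ?_ ?_)
        · rw [a1 q2 h]; exact n2
        · rw [a1 q2 h, c2]; exact pb_congr (fun i hi => (a1 i (by omega)).symm)
    · exact Or.inl h1
  · exact h2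

lemma seqLE_antisymm {X Y : ℕ → Bool} (h1 : SeqLE X Y) (h2 : SeqLE Y X) : X = Y := by
  rcases h1 with h1 | h1
  · rcases h2 with h2 | h2
    · obtain ⟨q1, a1, n1, c1⟩ := (seqLT_iff X Y).mp h1
      obtain ⟨q2, a2, n2, c2⟩ := (seqLT_iff Y X).mp h2
      rcases Nat.lt_trichotomy q1 q2 with h | h | h
      · exact absurd (a2 q1 h).symm n1
      · subst h
        rw [pb_congr a1, ← c2] at c1
        exact absurd c1 n1
      · exact absurd (a1 q2 h).symm n2
    · exact h2.symm
  · exact h1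
def Per (X : ℕ → Bool) (t : ℕ) : Prop := ∀ i, X (i + t) = X i

lemma per_mul {X : ℕ → Bool} {t : ℕ} (h : Per X t) (s : ℕ) : Per X (s * t) := by
  induction s with
  | zero => intro i; simp
  | succ s ih =>
    intro i
    have : i + (s+1) * t = (i + t) + s * t := by ring
    rw [this, ih (i + t), h i]

lemma per_mod_self {X : ℕ → Bool} {n : ℕ} (h : Per X n) (i : ℕ) : X i = X (i % n) := by
  conv_lhs => rw [← Nat.mod_add_div i n]
  have : i % n + n * (i / n) = i % n + (i / n) * n := by ring
  rw [this, per_mul h (i / n) (i % n)]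

lemma per_congr {X : ℕ → Bool} {n : ℕ} (h : Per X n) {i j : ℕ} (hij : i % n = j % n) :
    X i = X j := by
  rw [per_mod_self h i, per_mod_self h j, hij]

lemma per_of_per_per {X : ℕ → Bool} {a b : ℕ} (ha : Per X a) (hb : Per X b) :
    Per X (b % a) := by
  intro i
  have h1 : i + b % a + a * (b / a) = i + b := by
    have := Nat.mod_add_div b a
    omega
  have h2 : X (i + b % a + a * (b / a)) = X (i + b % a) := by
    have : a * (b / a) = (b / a) * a := by ring
    rw [this]
    exact per_mul ha (b / a) (i + b % a)
  rw [← h2, h1, hb i]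

lemma per_gcd {X : ℕ → Bool} {a b : ℕ} (ha : Per X a) (hb : Per X b) :
    Per X (Nat.gcd a b) := by
  induction a using Nat.strong_induction_on generalizing b with
  | _ a ih =>
    rcases Nat.eq_zero_or_pos a with rfl | hpos
    · simpa [Nat.gcd_zero_left] using hb
    · rw [Nat.gcd_rec]
      exact ih (b % a) (Nat.mod_lt b hpos) (per_of_per_per ha hb) ha

lemma shift_shift (a b : ℕ) (X : ℕ → Bool) :
    shiftSeq a (shiftSeq b X) = shiftSeq (a + b) X := by
  funext i
  simp [shiftSeq, Nat.add_assoc]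

lemma shift_eval (k : ℕ) (X : ℕ → Bool) (i : ℕ) : shiftSeq k X i = X (i + k) := rfl

lemma per_shift_eq {X : ℕ → Bool} {n : ℕ} (h : Per X n) : shiftSeq n X = X :=
  funext fun i => h i

lemma per_shift {X : ℕ → Bool} {n : ℕ} (h : Per X n) (k : ℕ) : Per (shiftSeq k X) n := by
  intro i
  show X (i + n + k) = X (i + k)
  have : i + n + k = (i + k) + n := by omega
  rw [this, h]

lemma shift_mod {X : ℕ → Bool} {n : ℕ} (h : Per X n) (k : ℕ) :
    shiftSeq k X = shiftSeq (k % n) X := by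
  funext i
  show X (i + k) = X (i + k % n)
  have hmc : n * (k / n) = (k / n) * n := Nat.mul_comm _ _
  have h1 : i + k = i + k % n + (k / n) * n := by
    have := Nat.mod_add_div k n
    omega
  rw [h1, per_mul h (k / n) (i + k % n)]

lemma exists_list_max : ∀ (l : List (ℕ → Bool)), l ≠ [] →
    ∃ X ∈ l, ∀ Y ∈ l, SeqLE Y X := by
  intro l
  induction l with
  | nil => intro h; exact absurd rfl h
  | cons x l ih =>
    intro _
    rcases l with _ | ⟨y, l'⟩
    · refine ⟨x, by simp, ?_⟩
      intro Y hY
      simp only [List.mem_singleton] at hY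
      subst hY
      exact seqLE_refl Y
    · obtain ⟨X, hX, hmax⟩ := ih (by simp)
      rcases seqLE_total x X with h | h
      · refine ⟨X, List.mem_cons_of_mem _ hX, ?_⟩
        intro Y hY
        rcases List.mem_cons.mp hY with rfl | hY
        · exact h
        · exact hmax Y hY
      · refine ⟨x, List.mem_cons_self, ?_⟩
        intro Y hY
        rcases List.mem_cons.mp hY with rfl | hY
        · exact seqLE_refl Y
        · exact seqLE_trans (hmax Y hY) h

lemma exists_maximal_shift {A : ℕ → Bool} {n : ℕ} (hper : Per A n) (hn : 0 < n) :
    ∃ j < n, SeqMaximal (shiftSeq j A) := by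
  set l : List (ℕ → Bool) := (List.range n).map (fun j => shiftSeq j A) with hl
  have hne : l ≠ [] := by
    simp [hl, List.range_eq_nil]
    omega
  obtain ⟨X, hX, hmax⟩ := exists_list_max l hne
  obtain ⟨j, hj, rfl⟩ := List.mem_map.mp hX
  have hj' : j < n := List.mem_range.mp hj
  refine ⟨j, hj', ?_⟩
  intro k
  rw [shift_shift, shift_mod (X := A) hper (k + j)]
  apply hmax
  simp [hl]
  exact ⟨(k + j) % n, Nat.mod_lt _ hn, rfl⟩

lemma bxor_self (b : Bool) : xor b b = false := by cases b <;> rfl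
lemma bxor_not_self (b : Bool) : xor b (!b) = true := by cases b <;> rfl
lemma btrue_xor (b : Bool) : xor true b = !b := by cases b <;> rfl
lemma bxor_xor_self (a b : Bool) : xor a (xor b b) = a := by cases a <;> cases b <;> rfl
lemma bxor_eq_false {a b : Bool} (h : xor a b = false) : a = b := by
  cases a <;> cases b <;> simp_all
lemma beq_not_of_xor_true {a b : Bool} (h : xor b a = true) : a = !b := by
  cases a <;> cases b <;> simp_all
lemma bool_cancel {p c s q : Bool} (h : xor (xor p c) s = xor p (xor q c)) : s = q := by
  cases p <;> cases c <;> cases s <;> cases q <;> simp_all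
lemma bool_not_ne (b : Bool) : (!b) ≠ b := by cases b <;> simp

lemma pb_false {X : ℕ → Bool} : ∀ {t : ℕ}, (∀ i < t, X i = false) → pb X t = false := by
  intro t
  induction t with
  | zero => intro _; rfl
  | succ t ih =>
    intro h
    rw [pb_succ, ih (fun i hi => h i (by omega)), h t (by omega)]
    rfl

lemma pb_xor (X Y : ℕ → Bool) (t : ℕ) :
    pb (fun i => xor (X i) (Y i)) t = xor (pb X t) (pb Y t) := by
  induction t with
  | zero => rfl
  | succ t ih =>
    rw [pb_succ, pb_succ, pb_succ, ih]
    show xor (xor (pb X t) (pb Y t)) (xor (X t) (Y t)) = _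
    cases pb X t <;> cases pb Y t <;> cases X t <;> cases Y t <;> rfl

lemma pb_window {X : ℕ → Bool} {n : ℕ} (h : Per X n) :
    ∀ k, pb (shiftSeq k X) n = pb X n := by
  intro k
  induction k with
  | zero =>
    apply pb_congr
    intro i _
    show X (i + 0) = X i
    rw [Nat.add_zero]
  | succ t ih =>
    have e1 : pb X (t + (n+1)) = xor (pb X t) (pb (shiftSeq t X) (n+1)) :=
      pb_add X t (n+1)
    have e2 : t + (n+1) = (t + 1) + n := by omega
    have e3 : pb X ((t+1) + n) = xor (pb X (t+1)) (pb (shiftSeq (t+1) X) n) :=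
      pb_add X (t+1) n
    have e4 : pb (shiftSeq t X) (n + 1)
        = xor (pb (shiftSeq t X) n) (X (n + t)) := pb_succ _ _
    have e5 : pb X (t + 1) = xor (pb X t) (X t) := pb_succ _ _
    have e6 : X (n + t) = X t := by rw [Nat.add_comm]; exact h t
    rw [e2, e3, e5] at e1
    rw [e4, e6, ih] at e1
    exact bool_cancel e1

lemma fd_main {M : ℕ → Bool} (hmax : SeqMaximal M) {k q : ℕ}
    (hqa : ∀ i < q, M (i + k) = M i) (hqd : M (q + k) ≠ M q) :
    M q = !(pb M q) ∧ M (q + k) = pb M q := by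
  have h := hmax k
  have hag : ∀ i < q, shiftSeq k M i = M i := fun i hi => hqa i hi
  have hne : shiftSeq k M q ≠ M q := hqd
  have hc := seqLE_cond h q hag hne
  have hpb : pb (shiftSeq k M) q = pb M q := pb_congr hag
  rw [hpb] at hc
  refine ⟨?_, hc⟩
  rw [← hc]
  cases h1 : M (q + k) <;> cases h2 : M q <;> simp_all

lemma K1 {M : ℕ → Bool} {n : ℕ} (hn : 0 < n) (hper : Per M n)
    (hmax : SeqMaximal M) (hmin : ∀ k, 0 < k → k < n → shiftSeq k M ≠ M) :
    SeqMaximal (fun i => xor (M i) (decide (i % n = n - 1))) := by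
  set C : ℕ → Bool := fun i => xor (M i) (decide (i % n = n - 1)) with hCdef
  have hCper : Per C n := by
    intro i
    show xor (M (i + n)) (decide ((i + n) % n = n - 1)) = _
    rw [hper i, Nat.add_mod_right]
  have hCMlt : ∀ i, i < n - 1 → C i = M i := by
    intro i h
    show xor (M i) (decide (i % n = n - 1)) = M i
    have : i % n ≠ n - 1 := by rw [Nat.mod_eq_of_lt (by omega)]; omega
    simp [this]
  have hCflip : ∀ i, i % n = n - 1 → C i = !(M i) := by
    intro i h
    show xor (M i) (decide (i % n = n - 1)) = !(M i)
    simp [h, Bool.xor_comm]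
  have hpbC : ∀ t, t ≤ n - 1 → pb C t = pb M t := by
    intro t ht
    exact pb_congr (fun i hi => hCMlt i (by omega))
  have main : ∀ k, 0 < k → k < n → SeqLE (shiftSeq k C) C := by
    intro k hk0 hkn
    set a : ℕ := n - 1 - k with ha
    set k' : ℕ := n - k with hk'
    have hak : a + k = n - 1 := by omega
    have hk'a : k' = a + 1 := by omega
    have hex : ∃ i, M (i + k) ≠ M i := by
      by_contra h
      push_neg at h
      exact hmin k hk0 hkn (funext fun i => h i)
    set q := Nat.find hex with hqdef
    have hqd : M (q + k) ≠ M q := Nat.find_spec hex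
    have hqa : ∀ i < q, M (i + k) = M i := by
      intro i hi
      have := Nat.find_min hex hi
      tauto
    obtain ⟨hfb, hfc⟩ := fd_main hmax hqa hqd
    rcases Nat.lt_trichotomy q a with hqlt | hqeq | hqgt
    -- CASE 1 : q < a
    · left
      have hag : ∀ i < q, shiftSeq k C i = C i := by
        intro i hi
        show C (i + k) = C i
        rw [hCMlt (i + k) (by omega), hCMlt i (by omega), hqa i hi]
      refine seqLT_of q hag ?_ ?_
      · show C (q + k) ≠ C q
        rw [hCMlt (q + k) (by omega), hCMlt q (by omega)]
        exact hqd
      · show C (q + k) = pb (shiftSeq k C) q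
        rw [pb_congr (fun i hi => hag i hi), hpbC q (by omega),
          hCMlt (q + k) (by omega), hfc]
    -- CASE 3 : q = a
    · have hfb' : M a = !(pb M a) := by rw [← hqeq]; exact hfb
      have hfc' : M (n - 1) = pb M a := by rw [← hak, ← hqeq]; exact hfc
      have hpbk' : pb M k' = true := by
        rw [hk'a, pb_succ, hfb']
        exact bxor_not_self _
      have hP0 : ∀ r, r + k ≤ n - 1 → C (r + k) = C r := by
        intro r hr
        rcases Nat.lt_or_ge r a with h | h
        · rw [hCMlt (r + k) (by omega), hCMlt r (by omega), hqa r (by omega)]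
        · have hra : r = a := by omega
          rw [hra, hak, hCflip (n-1) (by rw [Nat.mod_eq_of_lt (by omega)]),
            hCMlt a (by omega), hfc', hfb']
      have hPinf : ∀ i, i % n + k ≤ n - 1 → C (i + k) = C i := by
        intro i hi
        have hmc : n * (i / n) = (i / n) * n := Nat.mul_comm _ _
        have h1 : i + k = (i % n + k) + (i / n) * n := by
          have := Nat.mod_add_div i n
          omega
        have h2 : i = i % n + (i / n) * n := by
          have := Nat.mod_add_div i n
          omega
        rw [h1, per_mul hCper (i / n), hP0 (i % n) hi]
        conv_rhs => rw [h2, per_mul hCper (i / n)]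
      by_cases hb : ∀ j, j + 1 < k → C j = C (j + k')
      -- CASE 3b
      · right
        have hCall : ∀ r, r < n → r ≠ n - 1 → C (r + k) = C r := by
          intro r hr hrn
          rcases Nat.lt_or_ge r k' with h | h
          · exact hPinf r (by rw [Nat.mod_eq_of_lt (by omega)]; omega)
          · have h1 : r + k = (r - k') + n := by omega
            have h2 : r - k' + k' = r := by omega
            have h3 := hb (r - k') (by omega)
            rw [h2] at h3
            rw [h1, hCper (r - k'), h3]
        have hDfalse : pb (fun i => xor (C (i + k)) (C i)) (n - 1) = false := by
          apply pb_false
          intro i hi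
          show xor (C (i + k)) (C i) = false
          rw [hCall i (by omega) (by omega)]
          exact bxor_self _
        have hlast : C ((n-1) + k) = C (n-1) := by
          have h0 := pb_xor (fun i => C (i + k)) C n
          have h0' : pb (fun i => xor (C (i + k)) (C i)) n
              = xor (pb (shiftSeq k C) n) (pb C n) := h0
          rw [pb_window hCper k, bxor_self] at h0'
          have h2 : n = (n-1) + 1 := by omega
          rw [h2, pb_succ, hDfalse] at h0'
          have h3 : xor (C ((n-1) + k)) (C (n-1)) = false := by
            have := h0'
            simpa using this
          exact bxor_eq_false h3
        have hCstep : ∀ r, r < n → C (r + k) = C r := by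
          intro r hr
          rcases eq_or_ne r (n-1) with rfl | h
          · exact hlast
          · exact hCall r hr h
        funext i
        show C (i + k) = C i
        have hmc : n * (i / n) = (i / n) * n := Nat.mul_comm _ _
        have h1 : i + k = (i % n + k) + (i / n) * n := by
          have := Nat.mod_add_div i n
          omega
        have h2 : i = i % n + (i / n) * n := by
          have := Nat.mod_add_div i n
          omega
        rw [h1, per_mul hCper (i / n), hCstep (i % n) (Nat.mod_lt _ hn)]
        conv_rhs => rw [h2, per_mul hCper (i / n)]
      -- CASE 3a
      · left
        push_neg at hb
        have hexC : ∃ j, j + 1 < k ∧ C j ≠ C (j + k') := hb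
        set qh := Nat.find hexC with hqhdef
        obtain ⟨hqhk, hqhd⟩ := Nat.find_spec hexC
        have hqha : ∀ j < qh, C j = C (j + k') := by
          intro j hj
          have h1 := Nat.find_min hexC hj
          push_neg at h1
          exact h1 (by omega)
        have hma : ∀ j < qh, M (j + k') = M j := by
          intro j hj
          rw [← hCMlt (j + k') (by omega), ← hCMlt j (by omega)]
          exact (hqha j hj).symm
        have hmd : M (qh + k') ≠ M qh := by
          rw [← hCMlt (qh + k') (by omega), ← hCMlt qh (by omega)]
          exact fun h => hqhd h.symm
        obtain ⟨hgb, hgc⟩ := fd_main hmax hma hmd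
        set ρ := k' + qh with hrho
        have hag : ∀ i < ρ, shiftSeq k C i = C i := by
          intro i hi
          show C (i + k) = C i
          rcases Nat.lt_or_ge i k' with h | h
          · exact hPinf i (by rw [Nat.mod_eq_of_lt (by omega)]; omega)
          · have h1 : i + k = (i - k') + n := by omega
            have h2 : i - k' + k' = i := by omega
            have h3 := hqha (i - k') (by omega)
            rw [h2] at h3
            rw [h1, hCper (i - k'), h3]
        refine seqLT_of ρ hag ?_ ?_
        · show C (ρ + k) ≠ C ρ
          have h1 : ρ + k = qh + n := by omega
          have h2 : ρ = qh + k' := by omega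
          rw [h1, hCper qh, h2]
          exact hqhd
        · show C (ρ + k) = pb (shiftSeq k C) ρ
          have h1 : ρ + k = qh + n := by omega
          rw [h1, hCper qh, pb_congr (fun i hi => hag i hi)]
          have h2 : pb C ρ = pb M ρ := hpbC ρ (by omega)
          have hcg : pb (shiftSeq k' M) qh = pb M qh := pb_congr (fun i hi => hma i hi)
          have h3 : pb M ρ = xor (pb M k') (pb M qh) := by
            rw [hrho, pb_add M k' qh, hcg]
          rw [h2, h3, hpbk', hCMlt qh (by omega), hgb, btrue_xor]
    -- CASE 2 : q > a
    · left
      have hexq : ∃ i, M (i + k') ≠ M i := by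
        by_contra h
        push_neg at h
        exact hmin k' (by omega) (by omega) (funext fun i => h i)
      set qt := Nat.find hexq with hqtdef
      have hqtd : M (qt + k') ≠ M qt := Nat.find_spec hexq
      have hqta : ∀ i < qt, M (i + k') = M i := by
        intro i hi
        have := Nat.find_min hexq hi
        tauto
      obtain ⟨hgb, hgc⟩ := fd_main hmax hqta hqtd
      have hq1 : q ≤ k' + qt := by
        apply Nat.find_min' hex
        have h1 : (k' + qt) + k = qt + n := by omega
        rw [h1, hper qt]
        intro h
        rw [Nat.add_comm] at h
        exact hqtd h.symm
      have hq2 : qt ≤ q - k' := by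
        apply Nat.find_min' hexq
        have h1 : (q - k') + k' = q := by omega
        have h2 : q - k' + n = q + k := by omega
        rw [h1]
        intro h
        apply hqd
        rw [← h2, hper (q - k')]
        exact h.symm
      have hqeq2 : q = k' + qt := by omega
      have hpbk2 : pb M k' = true := by
        have e1 : pb M (q + 1) = true := by
          rw [pb_succ, hfb]
          exact bxor_not_self _
        have e2 : pb M (q + 1) = pb M k' := by
          have h1 : q + 1 = k' + (qt + 1) := by omega
          have hcg : pb (shiftSeq k' M) qt = pb M qt := pb_congr (fun i hi => hqta i hi)
          rw [h1, pb_add M k' (qt + 1), pb_succ, hcg]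
          have h3 : shiftSeq k' M qt = M (qt + k') := rfl
          rw [h3, hgc]
          exact bxor_xor_self _ _
        rw [← e2, e1]
      have hMn1 : M (n - 1) = M a := by
        rw [← hak]
        exact hqa a hqgt
      have hMa : M a = !(pb M a) := by
        have e1 : pb M k' = true := hpbk2
        rw [hk'a, pb_succ] at e1
        exact beq_not_of_xor_true e1
      have hag : ∀ i < a, shiftSeq k C i = C i := by
        intro i hi
        show C (i + k) = C i
        rw [hCMlt (i + k) (by omega), hCMlt i (by omega), hqa i (by omega)]
      refine seqLT_of a hag ?_ ?_
      · show C (a + k) ≠ C a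
        rw [hak, hCflip (n-1) (by rw [Nat.mod_eq_of_lt (by omega)]),
          hCMlt a (by omega), hMn1]
        exact bool_not_ne _
      · show C (a + k) = pb (shiftSeq k C) a
        rw [pb_congr (fun i hi => hag i hi), hpbC a (by omega),
          hak, hCflip (n-1) (by rw [Nat.mod_eq_of_lt (by omega)]), hMn1, hMa,
          Bool.not_not]
  intro k
  have hk := shift_mod hCper k
  rcases Nat.eq_zero_or_pos (k % n) with h0 | hpos
  · rw [hk, h0]
    right
    funext i
    show C (i + 0) = C i
    rw [Nat.add_zero]
  · rw [hk]
    exact main (k % n) hpos (Nat.mod_lt _ hn)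

lemma minPer_facts {A : ℕ → Bool} {n : ℕ} (hn : 0 < n) (hA : minPer A = n) :
    Per A n ∧ (∀ k, 0 < k → Per A k → n ≤ k) := by
  have hne : {m : ℕ | IsPeriodicSeq A m}.Nonempty := by
    by_contra h
    rw [Set.not_nonempty_iff_eq_empty] at h
    rw [minPer, h, Nat.sInf_empty] at hA
    omega
  have hmem := Nat.sInf_mem hne
  rw [← minPer, hA] at hmem
  refine ⟨hmem.2, ?_⟩
  intro k hk hper
  rw [← hA, minPer]
  exact Nat.sInf_le ⟨hk, hper⟩

lemma flipAt_per {X : ℕ → Bool} {n : ℕ} (h : Per X n) : Per (flipAt n X) n := by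
  intro i
  unfold flipAt
  rw [Nat.add_mod_right, h i]

lemma flipAt_eq_xor (n : ℕ) (X : ℕ → Bool) (i : ℕ) :
    flipAt n X i = xor (X i) (decide (i % n = n - 1)) := by
  unfold flipAt
  by_cases h : i % n = n - 1
  · simp [h, Bool.xor_comm]
  · simp [h]

-- K2 : structure lemma
lemma K2 {M C : ℕ → Bool} {n g : ℕ} (hn : 0 < n)
    (hmax : SeqMaximal M)
    (hMC : ∀ i, M i = xor (C i) (decide (i % n = n - 1)))
    (hCg : Per C g) (hgn : g ∣ n) (hg0 : 0 < g) (hgltn : g < n) : n = 2 * g := by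
  by_contra hcon
  -- n = g * (n/g), n/g ≥ 3
  have hdvd : g * (n / g) = n := Nat.mul_div_cancel' hgn
  have hq3 : 3 ≤ n / g := by
    rcases Nat.lt_or_ge (n / g) 2 with h | h
    · interval_cases h2 : (n / g) <;> omega
    · rcases Nat.lt_or_ge (n / g) 3 with h' | h'
      · have : n / g = 2 := by omega
        rw [this] at hdvd
        omega
      · exact h'
  have hn2g : 2 * g < n := by
    have := hdvd
    nlinarith
  set k0 : ℕ := n - 2 * g with hk0
  have hk0pos : 0 < k0 := by omega
  have hperk0 : Per C k0 := by
    have h1 : g ∣ k0 := Nat.dvd_sub hgn (dvd_mul_left g 2)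
    obtain ⟨t, ht⟩ := h1
    have hp : Per C (t * g) := per_mul hCg t
    intro i
    rw [ht]
    have h2 : g * t = t * g := Nat.mul_comm _ _
    rw [h2]
    exact hp i
  -- shift k0 M agrees with (C flipped at 2g-1) on [0, 2g)
  have hX : ∀ i, i < 2 * g → shiftSeq k0 M i = xor (C i) (decide (i = 2 * g - 1)) := by
    intro i hi
    show M (i + k0) = _
    rw [hMC (i + k0)]
    have h1 : (i + k0) % n = i + k0 := Nat.mod_eq_of_lt (by omega)
    rw [h1, hperk0 i]
    congr 1
    have : (i + k0 = n - 1) ↔ (i = 2 * g - 1) := by omega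
    simp [this]
  have hM2 : ∀ i, i < 2 * g → M i = C i := by
    intro i hi
    rw [hMC i]
    have h1 : i % n = i := Nat.mod_eq_of_lt (by omega)
    have h2 : i ≠ n - 1 := by omega
    simp [h1, h2]
  -- contradiction with maximality at k0
  have hle := hmax k0
  have hag : ∀ i < 2 * g - 1, shiftSeq k0 M i = M i := by
    intro i hi
    rw [hX i (by omega), hM2 i (by omega)]
    have : i ≠ 2 * g - 1 := by omega
    simp [this]
  have hne : shiftSeq k0 M (2*g-1) ≠ M (2*g-1) := by
    rw [hX (2*g-1) (by omega), hM2 (2*g-1) (by omega)]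
    simp
  have hc := seqLE_cond hle (2*g-1) hag hne
  -- compute both sides
  have hv : shiftSeq k0 M (2*g-1) = !(C (2*g-1)) := by
    rw [hX (2*g-1) (by omega)]
    simp
  have hpb1 : pb (shiftSeq k0 M) (2*g-1) = pb C (2*g-1) := by
    apply pb_congr
    intro i hi
    rw [hX i (by omega)]
    have : i ≠ 2 * g - 1 := by omega
    simp [this]
  -- pb C (2g-1) = C (2g-1)
  have hkey : pb C (2*g-1) = C (2*g-1) := by
    have h1 : 2*g-1 = g + (g-1) := by omega
    have hsg : shiftSeq g C = C := per_shift_eq hCg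
    have h2 : pb C (2*g-1) = xor (pb C g) (pb C (g-1)) := by
      rw [h1, pb_add C g (g-1), hsg]
    have h3 : pb C g = xor (pb C (g-1)) (C (g-1)) := by
      have : g = (g-1)+1 := by omega
      rw [this]
      exact pb_succ _ _
    have h4 : C (2*g-1) = C (g-1) := by
      have : 2*g-1 = (g-1) + g := by omega
      rw [this, hCg (g-1)]
    rw [h2, h3, h4]
    cases pb C (g-1) <;> cases C (g-1) <;> rfl
  rw [hv, hpb1, hkey] at hc
  exact (bool_not_ne _) hc

lemma bxor_cancel (a b : Bool) : xor (xor a b) b = a := by cases a <;> cases b <;> rfl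

lemma shift_mu {A : ℕ → Bool} {n : ℕ} (hn : 0 < n) (hA : minPer A = n)
    (hper : Per A n) (hmlt : sInf {m : ℕ | SeqMaximal (shiftSeq m A)} < n) :
    shiftSeq (sInf {m : ℕ | SeqMaximal (shiftSeq m A)}) (muSeq A)
      = flipAt n (shiftSeq (sInf {m : ℕ | SeqMaximal (shiftSeq m A)}) A) := by
  set m := sInf {m : ℕ | SeqMaximal (shiftSeq m A)} with hm
  have h1 : muSeq A = shiftSeq (n - m) (flipAt n (shiftSeq m A)) := by
    unfold muSeq
    rw [hA, ← hm]
  rw [h1, shift_shift]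
  have h2 : m + (n - m) = n := by omega
  rw [h2]
  exact per_shift_eq (flipAt_per (per_shift hper m))

end Work


/-- If `A` and `B` are periodic admissible sequences of minimal
period `n` and `μ A = μ B`, then either `A = B`, or `n` is even and
`S^{n/2} A = B`. -/
theorem stmt5 (A B : ℕ → Bool) (n : ℕ) (hn : 0 < n)
    (hA : minPer A = n) (hB : minPer B = n) (hmu : muSeq A = muSeq B) :
    A = B ∨ (Even n ∧ shiftSeq (n / 2) A = B) := by
  classical
  obtain ⟨hApern, hAmin⟩ := Work.minPer_facts hn hA
  obtain ⟨hBpern, hBmin⟩ := Work.minPer_facts hn hB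
  obtain ⟨jA, hjAlt, hjAmax⟩ := Work.exists_maximal_shift hApern hn
  obtain ⟨jB, hjBlt, hjBmax⟩ := Work.exists_maximal_shift hBpern hn
  set mA := sInf {m : ℕ | SeqMaximal (shiftSeq m A)} with hmAdef
  set mB := sInf {m : ℕ | SeqMaximal (shiftSeq m B)} with hmBdef
  have hmAlt : mA < n := lt_of_le_of_lt (Nat.sInf_le hjAmax) hjAlt
  have hmBlt : mB < n := lt_of_le_of_lt (Nat.sInf_le hjBmax) hjBlt
  have hmAmax : SeqMaximal (shiftSeq mA A) := Nat.sInf_mem (⟨jA, hjAmax⟩ :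
    {m : ℕ | SeqMaximal (shiftSeq m A)}.Nonempty)
  have hmBmax : SeqMaximal (shiftSeq mB B) := Nat.sInf_mem (⟨jB, hjBmax⟩ :
    {m : ℕ | SeqMaximal (shiftSeq m B)}.Nonempty)
  set M := shiftSeq mA A with hM
  set N := shiftSeq mB B with hN
  have hMper : Work.Per M n := Work.per_shift hApern mA
  have hNper : Work.Per N n := Work.per_shift hBpern mB
  have hAM : ∀ t, A t = M (t + (n - mA)) := by
    intro t
    show A t = A ((t + (n - mA)) + mA)
    have h1 : (t + (n - mA)) + mA = t + n := by omega
    rw [h1, hApern t]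
  have hBN : ∀ t, B t = N (t + (n - mB)) := by
    intro t
    show B t = B ((t + (n - mB)) + mB)
    have h1 : (t + (n - mB)) + mB = t + n := by omega
    rw [h1, hBpern t]
  have hMmin : ∀ k, 0 < k → k < n → shiftSeq k M ≠ M := by
    intro k hk0 hkn heq
    have hAk : Work.Per A k := by
      intro i
      rw [hAM (i + k), hAM i]
      have e2 : i + k + (n - mA) = (i + (n - mA)) + k := by omega
      rw [e2]
      exact congrFun heq (i + (n - mA))
    have := hAmin k hk0 hAk
    omega
  have hNmin : ∀ k, 0 < k → k < n → shiftSeq k N ≠ N := by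
    intro k hk0 hkn heq
    have hBk : Work.Per B k := by
      intro i
      rw [hBN (i + k), hBN i]
      have e2 : i + k + (n - mB) = (i + (n - mB)) + k := by omega
      rw [e2]
      exact congrFun heq (i + (n - mB))
    have := hBmin k hk0 hBk
    omega
  set C := flipAt n M with hC
  set C' := flipAt n N with hC'
  have hCmu : shiftSeq mA (muSeq A) = C := Work.shift_mu hn hA hApern hmAlt
  have hC'mu : shiftSeq mB (muSeq B) = C' := Work.shift_mu hn hB hBpern hmBlt
  have hMC : ∀ i, M i = xor (C i) (decide (i % n = n - 1)) := by
    intro i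
    rw [hC, Work.flipAt_eq_xor, Work.bxor_cancel]
  have hNC' : ∀ i, N i = xor (C' i) (decide (i % n = n - 1)) := by
    intro i
    rw [hC', Work.flipAt_eq_xor, Work.bxor_cancel]
  by_cases hmm : mA = mB
  · left
    have hCC' : C = C' := by
      rw [← hCmu, ← hC'mu, hmu, hmm]
    have hMN : M = N := by
      funext i
      rw [hMC i, hNC' i, hCC']
    funext i
    rw [hAM i, hBN i, hMN, hmm]
  · -- main case
    set j := mA + (n - mB) with hj
    have hj0 : 0 < j := by omega
    have hjne : j ≠ n := by omega
    have hj2n : j < 2 * n := by omega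
    have hmuB : muSeq B = shiftSeq (n - mB) C' := by
      unfold muSeq
      rw [hB, ← hmBdef, ← hC']
    have hCC' : C = shiftSeq j C' := by
      rw [← hCmu, hmu, hmuB, Work.shift_shift]
    have hCmax : SeqMaximal C := by
      have h1 := Work.K1 hn hMper hmAmax hMmin
      have he : C = fun i => xor (M i) (decide (i % n = n - 1)) :=
        funext fun i => Work.flipAt_eq_xor n M i
      rw [he]
      exact h1
    have hC'max : SeqMaximal C' := by
      have h1 := Work.K1 hn hNper hmBmax hNmin
      have he : C' = fun i => xor (N i) (decide (i % n = n - 1)) :=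
        funext fun i => Work.flipAt_eq_xor n N i
      rw [he]
      exact h1
    have hC'per : Work.Per C' n := Work.flipAt_per hNper
    have hCper : Work.Per C n := Work.flipAt_per hMper
    have hle1 : SeqLE C C' := by
      rw [hCC']
      exact hC'max j
    have hle2 : SeqLE C' C := by
      have e1 : shiftSeq ((n-1)*j) C = C' := by
        rw [hCC', Work.shift_shift]
        have e2 : (n-1)*j + j = j * n := by
          have : (n-1)*j + j = n * j := by
            have h3 : 1 ≤ n := hn
            nlinarith [Nat.sub_add_cancel h3]
          rw [this, Nat.mul_comm]
        rw [e2]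
        funext i
        exact Work.per_mul hC'per j i
      rw [← e1]
      exact hCmax ((n-1)*j)
    have hCeq : C = C' := Work.seqLE_antisymm hle1 hle2
    have hMN : M = N := by
      funext i
      rw [hMC i, hNC' i, hCeq]
    rw [← hCeq] at hCC'
    have hCj : Work.Per C j := fun i => (congrFun hCC' i).symm
    set g := Nat.gcd j n with hg
    have hCg : Work.Per C g := Work.per_gcd hCj hCper
    have hgdn : g ∣ n := Nat.gcd_dvd_right _ _
    have hgdj : g ∣ j := Nat.gcd_dvd_left _ _
    have hg0 : 0 < g := Nat.gcd_pos_of_pos_right _ hn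
    have hnj : ¬ (n ∣ j) := by
      rintro ⟨t, ht⟩
      rcases t with _ | _ | t
      · omega
      · omega
      · have h4 : n * 2 ≤ n * (t + 1 + 1) := Nat.mul_le_mul_left n (by omega)
        omega
    have hglt : g < n := by
      rcases Nat.lt_or_ge g n with h | h
      · exact h
      · exfalso
        have h1 : g ≤ n := Nat.le_of_dvd hn hgdn
        have h2 : g = n := by omega
        rw [h2] at hgdj
        exact hnj hgdj
    have hn2g : n = 2 * g := Work.K2 hn hmAmax hMC hCg hgdn hg0 hglt
    right
    refine ⟨⟨g, by omega⟩, ?_⟩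
    funext i
    have hjmod : j % n = g := by
      have h1 : g ∣ j % n := (Nat.dvd_mod_iff hgdn).mpr hgdj
      obtain ⟨u, hu⟩ := h1
      have h2 : j % n < n := Nat.mod_lt _ hn
      have h3 : j % n ≠ 0 := fun h => hnj (Nat.dvd_of_mod_eq_zero h)
      rcases u with _ | _ | u
      · omega
      · omega
      · exfalso
        have h4 : g * 2 ≤ g * (u + 1 + 1) := Nat.mul_le_mul_left g (by omega)
        omega
    show A (i + n / 2) = B i
    have hn2 : n / 2 = g := by omega
    rw [hn2, hBN i, ← hMN]
    show A (i + g) = A ((i + (n - mB)) + mA)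
    apply Work.per_congr hApern
    have e1 : (i + (n - mB)) + mA = i + j := by omega
    rw [e1, Nat.add_mod i g n, Nat.add_mod i j n, hjmod, Nat.mod_eq_of_lt hglt]
end

section
/- Let g_k (k = 1, 2, …) be a sequence of C¹ maps ℝ → ℝ converging to a C¹ map g in the C¹ topology (i.e., g_k → g and g_k′ → g′ uniformly on every compact subset of ℝ). Suppose each g_k has a periodic orbit O_k = {q_1(k) < q_2(k) < ⋯ < q_m(k)} of minimal period m, and for each i the point q_i(k) converges as k → ∞ to a point q_i, which is then a periodic point of g of period m. If the minimal period k₀ of the limit orbit {q_1, …, q_m} under g is smaller than m, then k₀ = m/2. -/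
open Filter Topology Function

private lemma eval_conv {F : Filter ℕ} {f : ℕ → ℝ → ℝ} {flim : ℝ → ℝ}
    (hc : Continuous flim)
    (hu : ∀ K : Set ℝ, IsCompact K → TendstoUniformlyOn f flim atTop K)
    (hF : F ≤ atTop) {x : ℕ → ℝ} {x₀ : ℝ} (hx : Tendsto x F (𝓝 x₀)) :
    Tendsto (fun k => f k (x k)) F (𝓝 (flim x₀)) := by
  have hK : IsCompact (Set.Icc (x₀ - 1) (x₀ + 1)) := isCompact_Icc
  have hmem : Set.Icc (x₀ - 1) (x₀ + 1) ∈ 𝓝 x₀ :=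
    Icc_mem_nhds (by linarith) (by linarith)
  have hU : TendstoUniformlyOn f flim F (Set.Icc (x₀ - 1) (x₀ + 1)) :=
    fun u hu' => ((hu _ hK) u hu').filter_mono hF
  exact hU.tendsto_comp hc.continuousWithinAt
    (tendsto_nhdsWithin_iff.mpr ⟨hx, hx hmem⟩)

private lemma slope_conv {F : Filter ℕ} {g : ℕ → ℝ → ℝ} {glim : ℝ → ℝ}
    (hgk : ∀ k, ContDiff ℝ 1 (g k)) (hg : ContDiff ℝ 1 glim)
    (hconv' : ∀ K : Set ℝ, IsCompact K →
      TendstoUniformlyOn (fun k => deriv (g k)) (deriv glim) atTop K)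
    (hF : F ≤ atTop) {x y : ℕ → ℝ} {X : ℝ} (hxy : ∀ k, x k ≠ y k)
    (hx : Tendsto x F (𝓝 X)) (hy : Tendsto y F (𝓝 X)) :
    Tendsto (fun k => (g k (x k) - g k (y k)) / (x k - y k)) F (𝓝 (deriv glim X)) := by
  have spec : ∀ k, ∃ c, (min (x k) (y k) ≤ c ∧ c ≤ max (x k) (y k)) ∧
      deriv (g k) c = (g k (x k) - g k (y k)) / (x k - y k) := by
    intro k
    rcases lt_or_gt_of_ne (hxy k) with h | h
    · obtain ⟨c, hc, hc2⟩ := exists_deriv_eq_slope (g k) h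
        ((hgk k).continuous.continuousOn) (((hgk k).differentiable one_ne_zero).differentiableOn)
      refine ⟨c, ⟨?_, ?_⟩, ?_⟩
      · exact (min_le_left _ _).trans hc.1.le
      · exact hc.2.le.trans (le_max_right _ _)
      · rw [hc2, ← neg_div_neg_eq, neg_sub, neg_sub]
    · obtain ⟨c, hc, hc2⟩ := exists_deriv_eq_slope (g k) h
        ((hgk k).continuous.continuousOn) (((hgk k).differentiable one_ne_zero).differentiableOn)
      refine ⟨c, ⟨?_, ?_⟩, ?_⟩
      · exact (min_le_right _ _).trans hc.1.le
      · exact hc.2.le.trans (le_max_left _ _)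
      · exact hc2
  choose ξ hξ hslope using spec
  have hmin : Tendsto (fun k => min (x k) (y k)) F (𝓝 X) := by
    simpa using hx.min hy
  have hmax : Tendsto (fun k => max (x k) (y k)) F (𝓝 X) := by
    simpa using hx.max hy
  have hξt : Tendsto ξ F (𝓝 X) :=
    tendsto_of_tendsto_of_tendsto_of_le_of_le hmin hmax
      (fun k => (hξ k).1) (fun k => (hξ k).2)
  have h := eval_conv (hg.continuous_deriv le_rfl) hconv' hF hξt
  exact h.congr hslope


/-- Let `g k` be `C¹` maps converging to a `C¹` map `g` in the `C¹`
topology (uniformly with derivatives on every compact set).  Suppose each `g k`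
has a periodic orbit `q k 0 < q k 1 < ⋯ < q k (m-1)` of minimal period `m`, and
`q k i → Q i` as `k → ∞`, the limit points `Q i` being periodic points of `g` of
period `m`.  If the minimal period `k₀` of the limit orbit under `g` is smaller
than `m`, then `k₀ = m / 2`. -/
theorem stmt8 (g : ℕ → ℝ → ℝ) (glim : ℝ → ℝ)
    (hgk : ∀ k, ContDiff ℝ 1 (g k)) (hg : ContDiff ℝ 1 glim)
    (hconv : ∀ K : Set ℝ, IsCompact K →
      TendstoUniformlyOn (fun k => g k) glim Filter.atTop K)
    (hconv' : ∀ K : Set ℝ, IsCompact K →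
      TendstoUniformlyOn (fun k => deriv (g k)) (deriv glim) Filter.atTop K)
    (m : ℕ) (hm : 0 < m) (q : ℕ → Fin m → ℝ) (Q : Fin m → ℝ)
    (hmono : ∀ k, StrictMono (q k))
    (hper : ∀ k i, Function.minimalPeriod (g k) (q k i) = m)
    (hinv : ∀ k i, ∃ j, g k (q k i) = q k j)
    (hlim : ∀ i, Filter.Tendsto (fun k => q k i) Filter.atTop (nhds (Q i)))
    (hQper : ∀ i, glim^[m] (Q i) = Q i)
    (k₀ : ℕ) (hk₀ : ∀ i, Function.minimalPeriod glim (Q i) = k₀)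
    (hlt : k₀ < m) :
    2 * k₀ = m := by
  classical
  set i0 : Fin m := ⟨0, hm⟩ with hi0def
  have hqinj : ∀ k, Function.Injective (q k) := fun k => (hmono k).injective
  have hqm : ∀ k i, (g k)^[m] (q k i) = q k i := by
    intro k i
    have h := Function.iterate_minimalPeriod (f := g k) (x := q k i)
    rwa [hper k i] at h
  set P : ℕ → Fin m → Fin m := fun k i => Classical.choose (hinv k i) with hP
  have hPspec : ∀ k i, g k (q k i) = q k (P k i) := fun k i => Classical.choose_spec (hinv k i)
  obtain ⟨π, hπ⟩ : ∃ π : Fin m → Fin m, ∃ᶠ k in atTop, P k = π := by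
    obtain ⟨π, hinf⟩ := Finite.exists_infinite_fiber P
    exact ⟨π, Nat.frequently_atTop_iff_infinite.mpr (Set.infinite_coe_iff.mp hinf)⟩
  set F : Filter ℕ := atTop ⊓ 𝓟 {k | P k = π} with hFdef
  haveI hne : F.NeBot := Filter.frequently_iff_neBot.mp hπ
  have hF : F ≤ atTop := inf_le_left
  have hgood : ∀ᶠ k in F, ∀ i, g k (q k i) = q k (π i) := by
    rw [hFdef, Filter.eventually_inf_principal]
    filter_upwards with k hk i
    rw [hPspec k i]
    exact congrArg (q k) (congrFun hk i)
  obtain ⟨k₁, hk₁⟩ := hgood.exists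
  have hπinj : Function.Injective π := by
    intro i j hij
    have h1 : g k₁ (q k₁ i) = g k₁ (q k₁ j) := by rw [hk₁ i, hk₁ j, hij]
    have h2 : (g k₁)^[m] (q k₁ i) = (g k₁)^[m] (q k₁ j) := by
      obtain ⟨m', rfl⟩ : ∃ m', m = m' + 1 := ⟨m - 1, (Nat.succ_pred_eq_of_pos hm).symm⟩
      rw [Function.iterate_succ_apply, Function.iterate_succ_apply, h1]
    rw [hqm, hqm] at h2
    exact hqinj k₁ h2
  have hiter₁ : ∀ (t : ℕ) (i : Fin m), (g k₁)^[t] (q k₁ i) = q k₁ (π^[t] i) := by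
    intro t i
    induction t with
    | zero => simp
    | succ t ih => rw [Function.iterate_succ_apply', ih, hk₁, ← Function.iterate_succ_apply' π t i]
  have hπm : ∀ (t : ℕ) (i : Fin m), π^[t] i = i ↔ m ∣ t := by
    intro t i
    constructor
    · intro h
      have hp : Function.IsPeriodicPt (g k₁) t (q k₁ i) := by
        show (g k₁)^[t] (q k₁ i) = q k₁ i
        rw [hiter₁ t i, h]
      have := hp.minimalPeriod_dvd
      rwa [hper k₁ i] at this
    · rintro ⟨c, rfl⟩
      apply hqinj k₁
      rw [← hiter₁, Function.iterate_mul]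
      exact Function.IsFixedPt.iterate (hqm k₁ i) c
  have hQπ : ∀ i, glim (Q i) = Q (π i) := by
    intro i
    have h1 : Tendsto (fun k => g k (q k i)) F (𝓝 (glim (Q i))) :=
      eval_conv hg.continuous hconv hF ((hlim i).mono_left hF)
    have h2 : Tendsto (fun k => g k (q k i)) F (𝓝 (Q (π i))) := by
      refine Tendsto.congr' ?_ ((hlim (π i)).mono_left hF)
      filter_upwards [hgood] with k hk
      exact (hk i).symm
    exact tendsto_nhds_unique h1 h2
  have hQiter : ∀ (t : ℕ) (i : Fin m), glim^[t] (Q i) = Q (π^[t] i) := by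
    intro t i
    induction t with
    | zero => simp
    | succ t ih => rw [Function.iterate_succ_apply', ih, hQπ, ← Function.iterate_succ_apply' π t i]
  have hk₀pos : 0 < k₀ := by
    rw [← hk₀ i0]
    exact Function.IsPeriodicPt.minimalPeriod_pos hm (hQper i0)
  have hQσ : ∀ i, Q (π^[k₀] i) = Q i := by
    intro i
    rw [← hQiter, ← hk₀ i, Function.iterate_minimalPeriod]
  have hne_q : ∀ (k : ℕ) (a b : Fin m), a ≠ b → q k a - q k b ≠ 0 :=
    fun k a b hab => sub_ne_zero.mpr ((hqinj k).ne hab)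
  -- the key ratio limit
  have Rlim : ∀ a b : Fin m, Q a = Q b → a ≠ b → ∀ n : ℕ,
      Tendsto (fun k => (q k (π^[n] a) - q k (π^[n] b)) / (q k a - q k b)) F
        (𝓝 (∏ t ∈ Finset.range n, deriv glim (glim^[t] (Q a)))) := by
    intro a b hQab hab n
    induction n with
    | zero =>
      simp only [Function.iterate_zero_apply, Finset.range_zero, Finset.prod_empty]
      have he : (fun k => (q k a - q k b) / (q k a - q k b)) = fun _ => (1 : ℝ) := by
        funext k; exact div_self (hne_q k a b hab)
      rw [he]; exact tendsto_const_nhds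
    | succ n ih =>
      have hne_n : π^[n] a ≠ π^[n] b := (hπinj.iterate n).ne hab
      have hstep : Tendsto (fun k =>
          (q k (π^[n + 1] a) - q k (π^[n + 1] b)) / (q k (π^[n] a) - q k (π^[n] b))) F
          (𝓝 (deriv glim (glim^[n] (Q a)))) := by
        have hxa : Tendsto (fun k => q k (π^[n] a)) F (𝓝 (Q (π^[n] a))) :=
          (hlim _).mono_left hF
        have hxb : Tendsto (fun k => q k (π^[n] b)) F (𝓝 (Q (π^[n] a))) := by
          have he : Q (π^[n] b) = Q (π^[n] a) := by rw [← hQiter, ← hQiter, hQab]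
          exact he ▸ (hlim _).mono_left hF
        have hsl := slope_conv hgk hg hconv' hF
          (x := fun k => q k (π^[n] a)) (y := fun k => q k (π^[n] b))
          (fun k => (hqinj k).ne hne_n) hxa hxb
        rw [hQiter n a]
        refine Tendsto.congr' ?_ hsl
        filter_upwards [hgood] with k hk
        rw [hk, hk, ← Function.iterate_succ_apply' π n a, ← Function.iterate_succ_apply' π n b]
      rw [Finset.prod_range_succ]
      refine (ih.mul hstep).congr fun k => ?_
      have hx0 : q k (π^[n] a) - q k (π^[n] b) ≠ 0 := hne_q k _ _ hne_n
      have hy0 : q k a - q k b ≠ 0 := hne_q k a b hab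
      field_simp
  -- the pair (π^[k₀] i0, 0)
  have hj0 : π^[k₀] i0 ≠ i0 := by
    intro h
    have := Nat.le_of_dvd hk₀pos ((hπm k₀ i0).mp h)
    omega
  have hQj0 : Q (π^[k₀] i0) = Q i0 := hQσ i0
  -- full product over one period equals 1
  have hprod1 : ∏ t ∈ Finset.range m, deriv glim (glim^[t] (Q i0)) = 1 := by
    have h1 := Rlim (π^[k₀] i0) i0 hQj0 hj0 m
    rw [hQj0] at h1
    have h2 : Tendsto (fun k =>
        (q k (π^[m] (π^[k₀] i0)) - q k (π^[m] i0)) /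
          (q k (π^[k₀] i0) - q k i0)) F (𝓝 1) := by
      have he : (fun k => (q k (π^[m] (π^[k₀] i0)) - q k (π^[m] i0)) /
          (q k (π^[k₀] i0) - q k i0)) = fun _ => (1 : ℝ) := by
        funext k
        rw [(hπm m _).mpr dvd_rfl, (hπm m _).mpr dvd_rfl]
        exact div_self (hne_q k _ _ hj0)
      rw [he]; exact tendsto_const_nhds
    exact tendsto_nhds_unique h1 h2
  have hDne : ∀ t ∈ Finset.range m, deriv glim (glim^[t] (Q i0)) ≠ 0 := by
    have : (∏ t ∈ Finset.range m, deriv glim (glim^[t] (Q i0))) ≠ 0 := by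
      rw [hprod1]; exact one_ne_zero
    exact Finset.prod_ne_zero_iff.mp this
  set lam : ℝ := ∏ t ∈ Finset.range k₀, deriv glim (glim^[t] (Q i0)) with hlamdef
  have hlamne : lam ≠ 0 :=
    Finset.prod_ne_zero_iff.mpr fun t ht =>
      hDne t (Finset.mem_range.mpr ((Finset.mem_range.mp ht).trans hlt))
  have Rlam : ∀ a b : Fin m, Q a = Q i0 → Q b = Q i0 → a ≠ b →
      Tendsto (fun k => (q k (π^[k₀] a) - q k (π^[k₀] b)) / (q k a - q k b)) F (𝓝 lam) := by
    intro a b ha hb hab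
    have h := Rlim a b (ha.trans hb.symm) hab k₀
    rwa [ha] at h
  -- the collapsing orbit indices
  set s : ℕ → Fin m := fun t => π^[k₀ * t] i0 with hsdef
  have hs_succ : ∀ t, s (t + 1) = π^[k₀] (s t) := by
    intro t
    show π^[k₀ * (t + 1)] i0 = π^[k₀] (π^[k₀ * t] i0)
    have he : k₀ * (t + 1) = k₀ + k₀ * t := by ring
    rw [he, Function.iterate_add_apply]
  have hsQ : ∀ t, Q (s t) = Q i0 := by
    intro t
    induction t with
    | zero => show Q (π^[k₀ * 0] i0) = Q i0; rw [Nat.mul_zero]; simp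
    | succ t ih => rw [hs_succ, hQσ, ih]
  have hs_ne : ∀ t, s t ≠ s (t + 1) := by
    intro t h
    have h2 : π^[k₀] (s t) = s t := by rw [← hs_succ]; exact h.symm
    have := Nat.le_of_dvd hk₀pos ((hπm k₀ (s t)).mp h2)
    omega
  rcases hlamne.lt_or_gt with hneg | hpos
  · -- lam < 0 : order reversing, σ² order preserving, so s 2 = s 0, giving m ∣ 2k₀
    have horder : ∀ᶠ k in F, ∀ a b : Fin m, Q a = Q i0 → Q b = Q i0 → a ≠ b →
        (q k (π^[k₀] a) - q k (π^[k₀] b)) / (q k a - q k b) < 0 := by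
      rw [Filter.eventually_all]
      intro a
      rw [Filter.eventually_all]
      intro b
      by_cases ha : Q a = Q i0
      · by_cases hb : Q b = Q i0
        · by_cases hab : a = b
          · filter_upwards with k h1 h2 h3; exact absurd hab h3
          · filter_upwards [(Rlam a b ha hb hab).eventually (eventually_lt_nhds hneg)]
              with k hk
            exact fun _ _ _ => hk
        · filter_upwards with k h1 h2; exact absurd h2 hb
      · filter_upwards with k h1; exact absurd h1 ha
    obtain ⟨k₂, hk₂⟩ := horder.exists
    have key' : ∀ a b : Fin m, Q a = Q i0 → Q b = Q i0 → a < b → π^[k₀] b < π^[k₀] a := by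
      intro a b ha hb hab
      have h := hk₂ a b ha hb hab.ne
      have hden : q k₂ a - q k₂ b < 0 := sub_neg.mpr (hmono k₂ hab)
      rcases div_neg_iff.mp h with ⟨hn, hd⟩ | ⟨hn, hd⟩
      · exact (hmono k₂).lt_iff_lt.mp (sub_pos.mp hn)
      · linarith
    have key2 : ∀ a b : Fin m, Q a = Q i0 → Q b = Q i0 → a < b →
        π^[k₀] (π^[k₀] a) < π^[k₀] (π^[k₀] b) := by
      intro a b ha hb hab
      exact key' _ _ (by rw [hQσ, hb]) (by rw [hQσ, ha]) (key' a b ha hb hab)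
    have hu2 : ∀ t, s (2 * (t + 1)) = π^[k₀] (π^[k₀] (s (2 * t))) := by
      intro t
      have h2 : 2 * (t + 1) = (2 * t + 1) + 1 := by ring
      rw [h2, hs_succ, hs_succ]
    rcases lt_trichotomy (s (2 * 0)) (s (2 * 1)) with h02 | h02 | h02
    · exfalso
      have hchain : ∀ t, s (2 * t) < s (2 * (t + 1)) := by
        intro t
        induction t with
        | zero => exact h02
        | succ t ih =>
          have h := key2 _ _ (hsQ (2 * t)) (hsQ (2 * (t + 1))) ih
          rwa [← hu2 t, ← hu2 (t + 1)] at h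
      have hsm : StrictMono fun t => s (2 * t) := strictMono_nat_of_lt_succ hchain
      obtain ⟨u, v, huv, he⟩ := Finite.exists_ne_map_eq_of_infinite fun t => s (2 * t)
      exact huv (hsm.injective he)
    · -- s 2 = s 0, so m ∣ 2 k₀
      have hfix : π^[k₀ * 2] i0 = i0 := by
        have h := h02.symm
        simp only [hsdef] at h
        norm_num at h
        exact h
      obtain ⟨c, hc⟩ := (hπm (k₀ * 2) i0).mp hfix
      have hclt : c < 2 := by
        have h2 : m * c < m * 2 := by rw [← hc]; omega
        exact Nat.lt_of_mul_lt_mul_left h2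
      have hc0 : c ≠ 0 := by rintro rfl; omega
      have hc1 : c = 1 := by omega
      rw [hc1] at hc
      omega
    · exfalso
      have hchain : ∀ t, s (2 * (t + 1)) < s (2 * t) := by
        intro t
        induction t with
        | zero => exact h02
        | succ t ih =>
          have h := key2 _ _ (hsQ (2 * (t + 1))) (hsQ (2 * t)) ih
          rwa [← hu2 t, ← hu2 (t + 1)] at h
      have hsm : StrictAnti fun t => s (2 * t) := strictAnti_nat_of_succ_lt hchain
      obtain ⟨u, v, huv, he⟩ := Finite.exists_ne_map_eq_of_infinite fun t => s (2 * t)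
      exact huv (hsm.injective he)
  · -- lam > 0 : order preserving, impossible
    exfalso
    have horder : ∀ᶠ k in F, ∀ a b : Fin m, Q a = Q i0 → Q b = Q i0 → a ≠ b →
        0 < (q k (π^[k₀] a) - q k (π^[k₀] b)) / (q k a - q k b) := by
      rw [Filter.eventually_all]
      intro a
      rw [Filter.eventually_all]
      intro b
      by_cases ha : Q a = Q i0
      · by_cases hb : Q b = Q i0
        · by_cases hab : a = b
          · filter_upwards with k h1 h2 h3; exact absurd hab h3
          · filter_upwards [(Rlam a b ha hb hab).eventually (eventually_gt_nhds hpos)]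
              with k hk
            exact fun _ _ _ => hk
        · filter_upwards with k h1 h2; exact absurd h2 hb
      · filter_upwards with k h1; exact absurd h1 ha
    obtain ⟨k₂, hk₂⟩ := horder.exists
    have key : ∀ a b : Fin m, Q a = Q i0 → Q b = Q i0 → a < b → π^[k₀] a < π^[k₀] b := by
      intro a b ha hb hab
      have h := hk₂ a b ha hb hab.ne
      have hden : q k₂ a - q k₂ b < 0 := sub_neg.mpr (hmono k₂ hab)
      rcases div_pos_iff.mp h with ⟨hn, hd⟩ | ⟨hn, hd⟩
      · linarith
      · exact (hmono k₂).lt_iff_lt.mp (sub_neg.mp hn)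
    rcases lt_trichotomy (s 0) (s 1) with h01 | h01 | h01
    · have hchain : ∀ t, s t < s (t + 1) := by
        intro t
        induction t with
        | zero => exact h01
        | succ t ih =>
          have h := key _ _ (hsQ t) (hsQ (t + 1)) ih
          rwa [← hs_succ t, ← hs_succ (t + 1)] at h
      have hsm : StrictMono s := strictMono_nat_of_lt_succ hchain
      obtain ⟨u, v, huv, he⟩ := Finite.exists_ne_map_eq_of_infinite s
      exact huv (hsm.injective he)
    · exact hs_ne 0 h01
    · have hchain : ∀ t, s (t + 1) < s t := by
        intro t
        induction t with
        | zero => exact h01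
        | succ t ih =>
          have h := key _ _ (hsQ (t + 1)) (hsQ t) ih
          rwa [← hs_succ t, ← hs_succ (t + 1)] at h
      have hsm : StrictAnti s := strictAnti_nat_of_succ_lt hchain
      obtain ⟨u, v, huv, he⟩ := Finite.exists_ne_map_eq_of_infinite s
      exact huv (hsm.injective he)
end
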